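/- Let m ≥ 4 be an integer, let π be a permutation of {0,1,…,m−3}, and let e_i, f_i ∈ Z_2 for 0 ≤ i ≤ m−3. Let a = Ψ_{2^{m−2}−1}(g^0) and b = Ψ_{2^{m−2}−1}(g^1) be the truncated ±1 sequences of length N = 2^{m−1}+2 associated with the generalized Boolean functions g^0, g^1 of the construction. Then (a,b) is a binary Z-complementary pair with zero correlation zone width 2^{m−2}+2^{π(m−3)}+1, i.e., ρ_a(τ)+ρ_b(τ) = 0 for every integer τ with 1 ≤ τ ≤ 2^{m−2}+2^{π(m−3)}. -/

import Mathlib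

open Finset

/-- The `j`-th binary digit of the integer `i`, as an element of `ZMod 2`. -/
def bitZ (i j : ℕ) : ZMod 2 := ((i / 2 ^ j) % 2 : ℕ)

/-- The generalized Boolean function `ζ^d` of the construction (in variables `x_0,…,x_{m-3}`). -/
def zeta (m : ℕ) (π : ℕ → ℕ) (d : ZMod 2) (x : ℕ → ZMod 2) : ZMod 2 :=
  (∑ α ∈ Finset.range (m - 3), x (π α) * x (π (α + 1))) + d * x (π (m - 3))

/-- The generalized Boolean function `η^d` of the construction. -/
def eta (m : ℕ) (π : ℕ → ℕ) (d : ZMod 2) (x : ℕ → ZMod 2) : ZMod 2 :=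
  (∑ α ∈ Finset.range (m - 3), (1 - x (π α)) * (1 - x (π (α + 1))))
    + (1 - d) * x (π (m - 3))

/-- The generalized Boolean function `g^d` of the construction (in `m` variables). -/
def gbf (m : ℕ) (π : ℕ → ℕ) (e f : ℕ → ZMod 2) (d : ZMod 2) (x : ℕ → ZMod 2) : ZMod 2 :=
  x (m - 2) * (1 - x (m - 1)) * zeta m π d x
    + (1 - x (m - 2)) * x (m - 1) * eta m π d x
    + d * (1 - x (m - 2)) * (1 - x (m - 1))
    + x (m - 2) * x (m - 1)
    + (∑ i ∈ Finset.range (m - 2), e i * x i)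
    + (∑ i ∈ Finset.range (m - 2), f i * (1 - x i))

/-- The ±1 sequence `Ψ(F)` associated with a generalized Boolean function:
its `i`-th entry is `(-1)^{F(r_{i,0}, r_{i,1}, …)}`. -/
def Psi (F : (ℕ → ZMod 2) → ZMod 2) (i : ℕ) : ℤ := (-1) ^ (F (bitZ i)).val

/-- The truncated sequence `Ψ_L(F)`, obtained by deleting the first (and last) `L`
entries of `Ψ(F)`: its `k`-th entry is the `(L+k)`-th entry of `Ψ(F)`. -/
def PsiT (F : (ℕ → ZMod 2) → ZMod 2) (L : ℕ) (k : ℕ) : ℤ := Psi F (L + k)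

/-- Aperiodic autocorrelation of a length-`N` sequence `a` at time shift `τ`. -/
def rho (N : ℕ) (a : ℕ → ℤ) (τ : ℕ) : ℤ :=
  ∑ k ∈ Finset.range (N - τ), a k * a (k + τ)


-- ===== auxiliary development =====
/-- natural-number bit -/
def bitN (i j : ℕ) : ℕ := i / 2 ^ j % 2

lemma bitZ_eq (i j : ℕ) : bitZ i j = (bitN i j : ZMod 2) := rfl

lemma bitN_le (i j : ℕ) : bitN i j ≤ 1 := by unfold bitN; omega

lemma bitN_eq_zero (i j : ℕ) (h : i < 2 ^ j) : bitN i j = 0 := by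
  unfold bitN; rw [Nat.div_eq_of_lt h]

lemma two_pow_pos' (j : ℕ) : 0 < 2 ^ j := Nat.pow_pos (by norm_num)

lemma bitN_half (x : ℕ) : x / 2 ^ 0 % 2 = bitN x 0 := rfl

lemma div_bit_eq (x j : ℕ) : x / 2 ^ j = 2 * (x / 2 ^ (j+1)) + bitN x j := by
  have h2 := Nat.div_add_mod (x / 2 ^ j) 2
  have h3 : x / 2 ^ j / 2 = x / 2 ^ (j+1) := by
    rw [Nat.div_div_eq_div_mul, pow_succ]
  unfold bitN; omega

/-- master decomposition at position j -/
lemma bit_decomp (x j : ℕ) :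
    x = 2 ^ (j+1) * (x / 2 ^ (j+1)) + 2 ^ j * bitN x j + x % 2 ^ j := by
  have h1 := Nat.div_add_mod x (2 ^ j)
  have h2 := div_bit_eq x j
  calc x = 2 ^ j * (x / 2 ^ j) + x % 2 ^ j := by omega
  _ = 2 ^ j * (2 * (x / 2 ^ (j+1)) + bitN x j) + x % 2 ^ j := by rw [← h2]
  _ = 2 ^ (j+1) * (x / 2 ^ (j+1)) + 2 ^ j * bitN x j + x % 2 ^ j := by ring

lemma dvH {B Q R : ℕ} (hB : 0 < B) (hR : R < B) : (B * Q + R) / B = Q := by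
  rw [Nat.mul_add_div hB, Nat.div_eq_of_lt hR, add_zero]

lemma btH {j Q R : ℕ} (hR : R < 2 ^ j) : bitN (2 ^ j * Q + R) j = Q % 2 := by
  unfold bitN; rw [dvH (two_pow_pos' j) hR]

lemma mod_lt_pow (x j : ℕ) : x % 2 ^ j < 2 ^ j := Nat.mod_lt _ (two_pow_pos' j)

/-- bit of a quadrant-shifted number, low position -/
lemma bitN_shift_low {n j : ℕ} (c x : ℕ) (hj : j < n) :
    bitN (c * 2 ^ n + x) j = bitN x j := by
  have hd := bit_decomp x j
  have hb := bitN_le x j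
  have hm := mod_lt_pow x j
  have hpow : 2 ^ n = 2 ^ (j+1) * 2 ^ (n - (j+1)) := by
    rw [← pow_add]; congr 1; omega
  have e1 : c * 2 ^ n + x
      = 2 ^ j * (2 * (c * 2 ^ (n-(j+1)) + x / 2 ^ (j+1)) + bitN x j) + x % 2 ^ j := by
    conv_lhs => rw [hpow, hd]
    ring
  rw [e1, btH hm]; omega

/-- bit of a quadrant-shifted number, high position -/
lemma bitN_shift_high {n c x j : ℕ} (hx : x < 2 ^ n) (hj : n ≤ j) :
    bitN (c * 2 ^ n + x) j = bitN c (j - n) := by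
  unfold bitN
  have h1 : (c * 2 ^ n + x) / 2 ^ n = c := by
    rw [Nat.mul_comm c (2 ^ n)]; exact dvH (two_pow_pos' n) hx
  have h2 : 2 ^ j = 2 ^ n * 2 ^ (j - n) := by rw [← pow_add]; congr 1; omega
  rw [h2, ← Nat.div_div_eq_div_mul, h1]

lemma pow_split {a b : ℕ} (h : b ≤ a) : 2 ^ a = 2 ^ b * 2 ^ (a - b) := by
  rw [← pow_add]; congr 1; omega

lemma pow_two_mul {a : ℕ} (h : 0 < a) : 2 ^ a = 2 * 2 ^ (a - 1) := by
  have : a = (a-1) + 1 := by omega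
  rw [this, pow_succ]; exact mul_comm _ _

/-- case decomposition at a bit -/
lemma bit_cases (i β : ℕ) : ∃ H r, r < 2 ^ β ∧
    ((bitN i β = 0 ∧ i = 2 ^ (β+1) * H + r) ∨ (bitN i β = 1 ∧ i = 2 ^ (β+1) * H + 2 ^ β + r)) := by
  have hd := bit_decomp i β
  have hb := bitN_le i β
  refine ⟨i / 2 ^ (β+1), i % 2 ^ β, mod_lt_pow i β, ?_⟩
  rcases (show bitN i β = 0 ∨ bitN i β = 1 by omega) with h | h <;>
    rw [h] at hd <;> [left; right] <;> simp only [mul_zero, mul_one, add_zero] at hd <;>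
    exact ⟨h, by omega⟩

lemma comp_bit {n x j : ℕ} (hx : x < 2 ^ n) (hj : j < n) :
    bitN (2 ^ n - 1 - x) j + bitN x j = 1 := by
  set q := x / 2 ^ j with hq'
  set r := x % 2 ^ j with hr'
  have hxd : x = 2 ^ j * q + r := (Nat.div_add_mod x (2 ^ j)).symm
  have hrlt : r < 2 ^ j := mod_lt_pow x j
  have hqlt : q < 2 ^ (n - j) := by
    have hp := pow_split (le_of_lt hj) (a := n)
    by_contra hc
    push_neg at hc
    have : 2 ^ j * 2 ^ (n-j) ≤ 2 ^ j * q := Nat.mul_le_mul_left _ hc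
    omega
  set Q := 2 ^ (n - j) - 1 - q with hQ'
  have hs : Q + q + 1 = 2 ^ (n - j) := by omega
  have hq2 : 2 ^ j * Q + 2 ^ j * q + 2 ^ j = 2 ^ n := by
    calc 2 ^ j * Q + 2 ^ j * q + 2 ^ j = 2 ^ j * (Q + q + 1) := by ring
    _ = 2 ^ j * 2 ^ (n - j) := by rw [hs]
    _ = 2 ^ n := (pow_split (le_of_lt hj)).symm
  have e : 2 ^ n - 1 - x = 2 ^ j * Q + (2 ^ j - 1 - r) := by omega
  have hb1 : bitN (2 ^ n - 1 - x) j = Q % 2 := by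
    rw [e]; exact btH (by omega)
  have hb2 : bitN x j = q % 2 := by rw [hxd]; exact btH hrlt
  have hnj : 2 ^ (n - j) = 2 * 2 ^ (n - j - 1) := pow_two_mul (by omega)
  omega

def flipB (β i : ℕ) : ℕ := if bitN i β = 1 then i - 2 ^ β else i + 2 ^ β

lemma two_pow_le_of_bit {β i : ℕ} (h : bitN i β = 1) : 2 ^ β ≤ i := by
  have hd := bit_decomp i β
  rw [h, mul_one] at hd
  omega

lemma flip_val0 {β i : ℕ} (h : bitN i β = 0) : flipB β i = i + 2 ^ β := by
  unfold flipB; rw [h]; simp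

lemma flip_val1 {β i : ℕ} (h : bitN i β = 1) : flipB β i = i - 2 ^ β := by
  unfold flipB; rw [h]; simp

lemma bitN_flip_self (β i : ℕ) : bitN (flipB β i) β = 1 - bitN i β := by
  obtain ⟨H, r, hr, hc⟩ := bit_cases i β
  have hp : (2:ℕ) ^ (β+1) = 2 * 2 ^ β := by rw [pow_succ]; exact mul_comm _ _
  rcases hc with ⟨h, hd⟩ | ⟨h, hd⟩
  · rw [flip_val0 h, h]
    have e : i + 2 ^ β = 2 ^ β * (2 * H + 1) + r := by
      have : 2 ^ β * (2 * H + 1) = 2 ^ (β+1) * H + 2 ^ β := by rw [hp]; ring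
      omega
    rw [e, btH hr]; omega
  · rw [flip_val1 h, h]
    have e : i - 2 ^ β = 2 ^ β * (2 * H) + r := by
      have : 2 ^ β * (2 * H) = 2 ^ (β+1) * H := by rw [hp]; ring
      omega
    rw [e, btH hr]; omega

lemma bitN_mod {γ β i : ℕ} (h : β < γ) : bitN (i % 2 ^ γ) β = bitN i β := by
  unfold bitN
  rw [pow_split (le_of_lt h) (a := γ), Nat.mod_mul_right_div_self]
  have : (2:ℕ) ∣ 2 ^ (γ - β) := dvd_pow_self 2 (by omega)
  rw [Nat.mod_mod_of_dvd _ this]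

lemma add_pow_lt {γ β r : ℕ} (hb : bitN r β = 0) (hr : r < 2 ^ γ) (h : β < γ) :
    r + 2 ^ β < 2 ^ γ := by
  obtain ⟨H, rm, hrm, hc⟩ := bit_cases r β
  rcases hc with ⟨_, hd⟩ | ⟨h1, _⟩
  · have hp : 2 ^ γ = 2 ^ (β+1) * 2 ^ (γ - (β+1)) := pow_split (by omega)
    set M := 2 ^ (γ - (β+1)) with hM'
    have hMpos : 0 < M := two_pow_pos' _
    have hlt : H < M := by
      by_contra hcc
      push_neg at hcc
      have : 2 ^ (β+1) * M ≤ 2 ^ (β+1) * H := Nat.mul_le_mul_left _ hcc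
      omega
    obtain ⟨M', hMM⟩ : ∃ M', M = M' + 1 := ⟨M - 1, by omega⟩
    have h2 : 2 ^ (β+1) * H ≤ 2 ^ (β+1) * M' := Nat.mul_le_mul_left _ (by omega)
    have h3 : 2 ^ (β+1) * M' + 2 ^ (β+1) = 2 ^ γ := by
      rw [hp, hMM]; ring
    have h4 : (2:ℕ) ^ (β+1) = 2 * 2 ^ β := by rw [pow_succ]; exact mul_comm _ _
    omega
  · omega

lemma flip_lt {n β i : ℕ} (hi : i < 2 ^ n) (hβ : β < n) : flipB β i < 2 ^ n := by
  have hb := bitN_le i β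
  rcases (show bitN i β = 0 ∨ bitN i β = 1 by omega) with h | h
  · rw [flip_val0 h]; exact add_pow_lt h hi hβ
  · rw [flip_val1 h]
    obtain ⟨B, hB⟩ : ∃ B, (2:ℕ)^β = B := ⟨_, rfl⟩
    rw [hB]
    omega

lemma flip_div_high {γ β i : ℕ} (h : β < γ) : flipB β i / 2 ^ γ = i / 2 ^ γ := by
  have hd : i = 2 ^ γ * (i / 2 ^ γ) + i % 2 ^ γ := (Nat.div_add_mod i (2 ^ γ)).symm
  set r := i % 2 ^ γ with hr'
  have hrlt : r < 2 ^ γ := mod_lt_pow i γ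
  have hbr : bitN r β = bitN i β := bitN_mod h
  have hb := bitN_le i β
  rcases (show bitN i β = 0 ∨ bitN i β = 1 by omega) with hbit | hbit
  · rw [flip_val0 hbit]
    have h2 : r + 2 ^ β < 2 ^ γ := add_pow_lt (by omega) hrlt h
    have e : i + 2 ^ β = 2 ^ γ * (i / 2 ^ γ) + (r + 2 ^ β) := by omega
    rw [e, dvH (two_pow_pos' γ) h2]
  · rw [flip_val1 hbit]
    have h2 : 2 ^ β ≤ r := two_pow_le_of_bit (by omega)
    have e : i - 2 ^ β = 2 ^ γ * (i / 2 ^ γ) + (r - 2 ^ β) := by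
      obtain ⟨B, hB⟩ : ∃ B, (2:ℕ)^β = B := ⟨_, rfl⟩
      rw [hB] at h2 ⊢
      omega
    rw [e, dvH (two_pow_pos' γ) (by
      obtain ⟨B, hB⟩ : ∃ B, (2:ℕ)^β = B := ⟨_, rfl⟩
      rw [hB] at h2 ⊢
      omega)]

lemma bitN_flip_high {γ β i : ℕ} (h : β < γ) : bitN (flipB β i) γ = bitN i γ := by
  unfold bitN; rw [flip_div_high h]

lemma bitN_flip_low {γ β i : ℕ} (h : γ < β) : bitN (flipB β i) γ = bitN i γ := by
  have hp : (2:ℕ) ^ β = 2 ^ γ * 2 ^ (β - γ) := pow_split (le_of_lt h)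
  have hev : (2:ℕ) ^ (β - γ) = 2 * 2 ^ (β - γ - 1) := pow_two_mul (by omega)
  have hb := bitN_le i β
  rcases (show bitN i β = 0 ∨ bitN i β = 1 by omega) with hbit | hbit
  · rw [flip_val0 hbit]
    unfold bitN
    have e : i + 2 ^ β = i + 2 ^ γ * 2 ^ (β - γ) := by rw [← hp]
    rw [e, Nat.add_mul_div_left _ _ (two_pow_pos' γ)]
    omega
  · rw [flip_val1 hbit]
    unfold bitN
    have h2 : 2 ^ β ≤ i := two_pow_le_of_bit hbit
    have h2' : 2 ^ γ * 2 ^ (β - γ) ≤ i := by rw [← hp]; exact h2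
    have e : i - 2 ^ β = i - 2 ^ γ * 2 ^ (β - γ) := by rw [← hp]
    rw [e, Nat.sub_mul_div _ _ _]
    have h3 : 2 ^ (β - γ) ≤ i / 2 ^ γ := (Nat.le_div_iff_mul_le (two_pow_pos' γ)).2 (by
      rw [mul_comm, ← hp]; exact h2)
    obtain ⟨B, hB⟩ : ∃ B, (2:ℕ)^(β - γ) = B := ⟨_, rfl⟩
    rw [hB] at h3 hev
    rw [hB]
    omega

lemma bitN_flip_ne {γ β i : ℕ} (h : γ ≠ β) : bitN (flipB β i) γ = bitN i γ := by
  rcases Nat.lt_or_ge γ β with h' | h'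
  · exact bitN_flip_low h'
  · exact bitN_flip_high (by omega)

lemma flipB_flipB (β i : ℕ) : flipB β (flipB β i) = i := by
  have h1 := bitN_flip_self β i
  have hb := bitN_le i β
  rcases (show bitN i β = 0 ∨ bitN i β = 1 by omega) with h | h
  · rw [flip_val0 h] at h1 ⊢
    rw [h] at h1
    rw [flip_val1 (by omega)]
    omega
  · have h2 := two_pow_le_of_bit h
    rw [flip_val1 h] at h1 ⊢
    rw [h] at h1
    rw [flip_val0 (by omega)]
    omega

lemma flip_ne (β i : ℕ) : flipB β i ≠ i := by
  have hpos := two_pow_pos' β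
  have hb := bitN_le i β
  rcases (show bitN i β = 0 ∨ bitN i β = 1 by omega) with h | h
  · rw [flip_val0 h]; omega
  · rw [flip_val1 h]; have := two_pow_le_of_bit h; omega

lemma flip_shift {β i j τ : ℕ} (hb : bitN i β = bitN j β) (hij : j = i + τ) :
    flipB β j = flipB β i + τ := by
  subst hij
  have hble := bitN_le i β
  rcases (show bitN i β = 0 ∨ bitN i β = 1 by omega) with h | h
  · rw [flip_val0 h, flip_val0 (by omega), h] at *; omega
  · have h2 := two_pow_le_of_bit h
    rw [flip_val1 h, flip_val1 (by omega)]
    omega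

lemma bitN_shift_low' {n j : ℕ} (c x : ℕ) (hj : j < n) :
    bitN (c * 2 ^ n + x) j = bitN x j := by
  have hd := bit_decomp x j
  have hb := bitN_le x j
  have hm := mod_lt_pow x j
  have hpow : 2 ^ n = 2 ^ (j+1) * 2 ^ (n - (j+1)) := pow_split (by omega)
  have e1 : c * 2 ^ n + x
      = 2 ^ j * (2 * (c * 2 ^ (n-(j+1)) + x / 2 ^ (j+1)) + bitN x j) + x % 2 ^ j := by
    conv_lhs => rw [hpow, hd]
    ring
  have e2 : x = 2 ^ j * (2 * (x / 2 ^ (j+1)) + bitN x j) + x % 2 ^ j := by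
    calc x = 2 ^ (j+1) * (x / 2 ^ (j+1)) + 2 ^ j * bitN x j + x % 2 ^ j := hd
    _ = 2 ^ j * (2 * (x / 2 ^ (j+1)) + bitN x j) + x % 2 ^ j := by ring
  rw [e1, btH hm]
  conv_rhs => rw [e2]
  rw [btH hm]
  omega

lemma flip_quad {n β c x : ℕ} (hx : x < 2 ^ n) (hβ : β < n) :
    flipB β (c * 2 ^ n + x) = c * 2 ^ n + flipB β x := by
  have hb : bitN (c * 2 ^ n + x) β = bitN x β := bitN_shift_low' c x hβ
  have hble := bitN_le x β
  rcases (show bitN x β = 0 ∨ bitN x β = 1 by omega) with h | h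
  · rw [flip_val0 h, flip_val0 (by omega)]; omega
  · have h2 := two_pow_le_of_bit h
    rw [flip_val1 h, flip_val1 (by omega)]
    omega

lemma comp_flip {n β x : ℕ} (hx : x < 2 ^ n) (hβ : β < n) :
    2 ^ n - 1 - flipB β x = flipB β (2 ^ n - 1 - x) := by
  have hcb := comp_bit hx hβ
  have hb := bitN_le x β
  have hfl := flip_lt hx hβ
  rcases (show bitN x β = 0 ∨ bitN x β = 1 by omega) with h | h
  · have hcx : bitN (2 ^ n - 1 - x) β = 1 := by omega
    rw [flip_val0 h, flip_val1 hcx]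
    have h3 := two_pow_le_of_bit hcx
    rw [flip_val0 h] at hfl
    obtain ⟨B, hB⟩ : ∃ B, (2:ℕ)^β = B := ⟨_, rfl⟩
    rw [hB] at h3 hfl ⊢
    omega
  · have hcx : bitN (2 ^ n - 1 - x) β = 0 := by omega
    rw [flip_val1 h, flip_val0 hcx]
    have h2 := two_pow_le_of_bit h
    obtain ⟨B, hB⟩ : ∃ B, (2:ℕ)^β = B := ⟨_, rfl⟩
    rw [hB] at h2 ⊢
    omega

def neg1 (t : ZMod 2) : ℤ := (-1) ^ t.val

lemma neg1_mul : ∀ s t : ZMod 2, neg1 s * neg1 t = neg1 (s + t) := by decide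

lemma neg1_cancel : ∀ s t : ZMod 2, t = s + 1 → neg1 s + neg1 t = 0 := by decide

lemma zb_flip_self (β i : ℕ) : bitZ (flipB β i) β = bitZ i β + 1 := by
  rw [bitZ_eq, bitZ_eq, bitN_flip_self]
  have h := bitN_le i β
  rcases (show bitN i β = 0 ∨ bitN i β = 1 by omega) with h' | h' <;> rw [h'] <;> decide

lemma zb_flip_ne {γ β i : ℕ} (h : γ ≠ β) : bitZ (flipB β i) γ = bitZ i γ := by
  rw [bitZ_eq, bitZ_eq, bitN_flip_ne h]

lemma zb_comp {n x j : ℕ} (hx : x < 2 ^ n) (hj : j < n) :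
    bitZ (2 ^ n - 1 - x) j = 1 + bitZ x j := by
  have h := comp_bit hx hj
  have h1 := bitN_le x j
  rw [bitZ_eq, bitZ_eq]
  rcases (show bitN x j = 0 ∨ bitN x j = 1 by omega) with h' | h' <;>
    rw [h'] <;> rw [show bitN (2^n - 1 - x) j = 1 - bitN x j by omega, h'] <;> decide

lemma zb_eq_of_bitN_eq {a b δ ε : ℕ} (h : bitN a δ = bitN b ε) : bitZ a δ = bitZ b ε := by
  rw [bitZ_eq, bitZ_eq, h]

lemma zb_sum_of_ne {a b δ : ℕ} (h : bitN a δ ≠ bitN b δ) : bitZ a δ + bitZ b δ = 1 := by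
  have h1 := bitN_le a δ
  have h2 := bitN_le b δ
  rw [bitZ_eq, bitZ_eq]
  rcases (show bitN a δ = 0 ∧ bitN b δ = 1 ∨ bitN a δ = 1 ∧ bitN b δ = 0 by omega) with
    ⟨u,v⟩ | ⟨u,v⟩ <;> rw [u, v] <;> decide

lemma zb_sum_of_eq {a b δ : ℕ} (h : bitN a δ = bitN b δ) : bitZ a δ + bitZ b δ = 0 := by
  rw [bitZ_eq, bitZ_eq, h]
  exact CharTwo.add_self_eq_zero _

/-- quadratic exponent -/
def qE (n : ℕ) (π : ℕ → ℕ) (x : ℕ) : ZMod 2 :=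
  ∑ α ∈ range (n - 1), bitZ x (π α) * bitZ x (π (α + 1))

/-- linear exponent -/
def sE (n : ℕ) (e f : ℕ → ZMod 2) (x : ℕ) : ZMod 2 :=
  ∑ i ∈ range n, (e i * bitZ x i + f i * (1 - bitZ x i))

lemma sE_flip (n : ℕ) (e f : ℕ → ZMod 2) {β : ℕ} (hβ : β < n) (x : ℕ) :
    sE n e f (flipB β x) = sE n e f x + e β + f β := by
  unfold sE
  have hmem : β ∈ range n := mem_range.2 hβ
  rw [← Finset.add_sum_erase _ _ hmem, ← Finset.add_sum_erase _ _ hmem]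
  have h1 : ∑ i ∈ (range n).erase β, (e i * bitZ (flipB β x) i + f i * (1 - bitZ (flipB β x) i))
      = ∑ i ∈ (range n).erase β, (e i * bitZ x i + f i * (1 - bitZ x i)) := by
    refine Finset.sum_congr rfl fun i hi => ?_
    rw [zb_flip_ne (Finset.ne_of_mem_erase hi)]
  rw [h1, zb_flip_self]
  have key : ∀ a b z : ZMod 2, a * (z + 1) + b * (1 - (z + 1)) = a * z + b * (1 - z) + a + b := by
    decide
  rw [key]
  ring

lemma sE_comp {n x : ℕ} (e f : ℕ → ZMod 2) (hx : x < 2 ^ n) :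
    sE n e f (2 ^ n - 1 - x) + sE n e f x = (∑ i ∈ range n, e i) + (∑ i ∈ range n, f i) := by
  unfold sE
  rw [← Finset.sum_add_distrib, ← Finset.sum_add_distrib]
  refine Finset.sum_congr rfl fun i hi => ?_
  rw [zb_comp hx (mem_range.1 hi)]
  have key : ∀ a b z : ZMod 2, a * (1 + z) + b * (1 - (1 + z)) + (a * z + b * (1 - z)) = a + b := by
    decide
  rw [key]

/-- flip of the quadratic exponent -/
lemma qE_flip (n : ℕ) (π : ℕ → ℕ)
    (hinj : ∀ a, a < n → ∀ b, b < n → π a = π b → a = b) {γ : ℕ} (hγ : γ < n) (x : ℕ) :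
    qE n π (flipB (π γ) x) = qE n π x
      + (if 1 ≤ γ then bitZ x (π (γ - 1)) else 0)
      + (if γ + 1 ≤ n - 1 then bitZ x (π (γ + 1)) else 0) := by
  unfold qE
  have hne : ∀ α, α < n → α ≠ γ → π α ≠ π γ := by
    intro α hα hne hc
    exact hne (hinj α hα γ hγ hc)
  -- pointwise description
  have key : ∀ α ∈ range (n - 1),
      bitZ (flipB (π γ) x) (π α) * bitZ (flipB (π γ) x) (π (α + 1))
      = bitZ x (π α) * bitZ x (π (α + 1))
        + (if α = γ then bitZ x (π (γ + 1)) else 0)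
        + (if α + 1 = γ then bitZ x (π (γ - 1)) else 0) := by
    intro α hα
    have hα' := mem_range.1 hα
    by_cases h1 : α = γ
    · -- α = γ; then α + 1 ≠ γ
      subst h1
      rw [if_pos rfl, if_neg (by omega)]
      rw [zb_flip_self, zb_flip_ne (hne (α+1) (by omega) (by omega)), add_zero]
      ring
    · by_cases h2 : α + 1 = γ
      · rw [if_neg h1, if_pos h2]
        rw [zb_flip_ne (hne α (by omega) h1)]
        rw [show π (α + 1) = π γ by rw [h2], zb_flip_self]
        have : π (γ - 1) = π α := by congr 1; omega
        rw [this]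
        ring
      · rw [if_neg h1, if_neg h2, zb_flip_ne (hne α (by omega) h1),
          zb_flip_ne (hne (α+1) (by omega) h2)]
        ring
  rw [Finset.sum_congr rfl key]
  rw [Finset.sum_add_distrib, Finset.sum_add_distrib]
  have hs1 : (∑ α ∈ range (n-1), if α = γ then bitZ x (π (γ + 1)) else 0)
      = if γ + 1 ≤ n - 1 then bitZ x (π (γ + 1)) else 0 := by
    by_cases hc : γ + 1 ≤ n - 1
    · rw [if_pos hc]
      refine Finset.sum_eq_single_of_mem γ (mem_range.2 (by omega)) (fun b _ hb => if_neg hb) |>.trans ?_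
      rw [if_pos rfl]
    · rw [if_neg hc]
      refine Finset.sum_eq_zero (fun b hb => ?_)
      have := mem_range.1 hb
      rw [if_neg (by omega)]
  have hs2 : (∑ α ∈ range (n-1), if α + 1 = γ then bitZ x (π (γ - 1)) else 0)
      = if 1 ≤ γ then bitZ x (π (γ - 1)) else 0 := by
    by_cases hc : 1 ≤ γ
    · rw [if_pos hc]
      refine Finset.sum_eq_single_of_mem (γ-1) (mem_range.2 (by omega)) (fun b hb hbne => if_neg (by omega)) |>.trans ?_
      rw [if_pos (by omega)]
    · rw [if_neg hc]
      refine Finset.sum_eq_zero (fun b hb => ?_)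
      rw [if_neg (by omega)]
  rw [hs1, hs2]
  ring

section Eval
variable {m : ℕ} (hm : 4 ≤ m) (π : ℕ → ℕ) (e f : ℕ → ZMod 2) (d : ZMod 2)

lemma bitN_zero (j : ℕ) : bitN 0 j = 0 := by unfold bitN; simp

lemma zsub : ∀ a b : ZMod 2, a - b = a + b := by decide

include hm in
/-- bits of `c * 2^(m-2) + x` at the two high positions, for c < 4 -/
lemma high_bits {c x : ℕ} (hx : x < 2 ^ (m-2)) :
    bitZ (c * 2 ^ (m-2) + x) (m-2) = (bitN c 0 : ZMod 2)
      ∧ bitZ (c * 2 ^ (m-2) + x) (m-1) = (bitN c 1 : ZMod 2) := by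
  constructor
  · rw [bitZ_eq, bitN_shift_high hx (le_refl _), Nat.sub_self]
  · rw [bitZ_eq, bitN_shift_high hx (by omega), show m - 1 - (m-2) = 1 by omega]

lemma low_bits {c x : ℕ} (j : ℕ) (hj : j < m - 2) :
    bitZ (c * 2 ^ (m-2) + x) j = bitZ x j := by
  rw [bitZ_eq, bitZ_eq, bitN_shift_low' c x hj]

include hm in
/-- evaluation on quadrant 1 -/
lemma eval_q1 (hlt : ∀ a, a < m-2 → π a < m-2) {x : ℕ} (hx : x < 2 ^ (m-2)) :
    gbf m π e f d (bitZ (2 ^ (m-2) + x))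
      = qE (m-2) π x + d * bitZ x (π (m-3)) + sE (m-2) e f x := by
  obtain ⟨hb2, hb1⟩ := high_bits hm (m := m) (c := 1) hx
  norm_num [show bitN 1 0 = 1 from rfl, show bitN 1 1 = 0 from rfl] at hb2 hb1
  have hlow : ∀ j, j < m - 2 → bitZ (2 ^ (m-2) + x) j = bitZ x j := by
    intro j hj
    have := low_bits (m := m) (c := 1) (x := x) j hj
    rwa [one_mul] at this
  unfold gbf zeta eta
  rw [hb2, hb1]
  rw [show (1:ZMod 2) * (1 - 0) = 1 by ring, show (1:ZMod 2) - 1 = 0 by ring]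
  rw [show ∀ z w : ZMod 2, 1 * (z + d * w) + 0 * 0 * (((∑ α ∈ Finset.range (m - 3),
      (1 - bitZ (2 ^ (m-2) + x) (π α)) * (1 - bitZ (2 ^ (m-2) + x) (π (α + 1)))))
      + (1 - d) * bitZ (2 ^ (m-2) + x) (π (m - 3)))
      + d * 0 * (1 - 0) + 1 * 0 = z + d * w from fun z w => by ring]
  have hq : ∑ α ∈ Finset.range (m - 3),
      bitZ (2 ^ (m-2) + x) (π α) * bitZ (2 ^ (m-2) + x) (π (α + 1))
      = qE (m-2) π x := by
    unfold qE
    rw [show m - 2 - 1 = m - 3 by omega]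
    refine Finset.sum_congr rfl fun α hα => ?_
    have hα' := mem_range.1 hα
    rw [hlow (π α) (hlt α (by omega)), hlow (π (α+1)) (hlt (α+1) (by omega))]
  have hp : bitZ (2 ^ (m-2) + x) (π (m - 3)) = bitZ x (π (m-3)) :=
    hlow (π (m-3)) (hlt (m-3) (by omega))
  have hsum : (∑ i ∈ Finset.range (m - 2), e i * bitZ (2 ^ (m-2) + x) i)
      + (∑ i ∈ Finset.range (m - 2), f i * (1 - bitZ (2 ^ (m-2) + x) i))
      = sE (m-2) e f x := by
    unfold sE
    rw [Finset.sum_add_distrib]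
    congr 1 <;> refine Finset.sum_congr rfl fun i hi => ?_ <;>
      rw [hlow i (mem_range.1 hi)]
  rw [hq, hp]
  rw [← hsum]
  ring

include hm in
/-- evaluation on quadrant 2 -/
lemma eval_q2 (hlt : ∀ a, a < m-2 → π a < m-2) {x : ℕ} (hx : x < 2 ^ (m-2)) :
    gbf m π e f d (bitZ (2 * 2 ^ (m-2) + x))
      = qE (m-2) π (2 ^ (m-2) - 1 - x) + (1 - d) * bitZ x (π (m-3)) + sE (m-2) e f x := by
  obtain ⟨hb2, hb1⟩ := high_bits hm (m := m) (c := 2) hx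
  norm_num [show bitN 2 0 = 0 from rfl, show bitN 2 1 = 1 from rfl] at hb2 hb1
  have hlow := low_bits (m := m) (c := 2) (x := x)
  unfold gbf zeta eta
  rw [hb2, hb1]
  rw [show ∀ z w : ZMod 2, 0 * (1 - 1) * (((∑ α ∈ Finset.range (m - 3),
      bitZ (2 * 2 ^ (m-2) + x) (π α) * bitZ (2 * 2 ^ (m-2) + x) (π (α + 1))))
      + d * bitZ (2 * 2 ^ (m-2) + x) (π (m - 3)))
      + (1 - 0) * 1 * (z + (1-d) * w) + d * (1 - 0) * (1 - 1) + 0 * 1 = z + (1-d) * w from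
      fun z w => by ring]
  have hq : ∑ α ∈ Finset.range (m - 3),
      (1 - bitZ (2 * 2 ^ (m-2) + x) (π α)) * (1 - bitZ (2 * 2 ^ (m-2) + x) (π (α + 1)))
      = qE (m-2) π (2 ^ (m-2) - 1 - x) := by
    unfold qE
    rw [show m - 2 - 1 = m - 3 by omega]
    refine Finset.sum_congr rfl fun α hα => ?_
    have hα' := mem_range.1 hα
    have k1 : ∀ j, j < m - 2 → 1 - bitZ (2 * 2 ^ (m-2) + x) j = bitZ (2 ^ (m-2) - 1 - x) j := by
      intro j hj
      rw [hlow j hj, zb_comp hx hj]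
      exact zsub 1 _
    rw [k1 (π α) (hlt α (by omega)), k1 (π (α+1)) (hlt (α+1) (by omega))]
  have hp : bitZ (2 * 2 ^ (m-2) + x) (π (m - 3)) = bitZ x (π (m-3)) :=
    hlow (π (m-3)) (hlt (m-3) (by omega))
  have hsum : (∑ i ∈ Finset.range (m - 2), e i * bitZ (2 * 2 ^ (m-2) + x) i)
      + (∑ i ∈ Finset.range (m - 2), f i * (1 - bitZ (2 * 2 ^ (m-2) + x) i))
      = sE (m-2) e f x := by
    unfold sE
    rw [Finset.sum_add_distrib]
    congr 1 <;> refine Finset.sum_congr rfl fun i hi => ?_ <;>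
      rw [hlow i (mem_range.1 hi)]
  rw [hq, hp, ← hsum]
  ring

include hm in
/-- evaluation at the left boundary point -/
lemma eval_q0 :
    gbf m π e f d (bitZ (2 ^ (m-2) - 1)) = d + ∑ i ∈ Finset.range (m-2), e i := by
  have hlow : ∀ j, j < m - 2 → bitZ (2 ^ (m-2) - 1) j = 1 := by
    intro j hj
    have h0 := comp_bit (n := m-2) (x := 0) (j := j) (Nat.pow_pos (by norm_num)) hj
    rw [bitN_zero] at h0
    rw [show 2 ^ (m-2) - 1 = 2 ^ (m-2) - 1 - 0 by omega, bitZ_eq,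
      show bitN (2 ^ (m-2) - 1 - 0) j = 1 by omega]
    rfl
  have hhi : ∀ j, m - 2 ≤ j → bitZ (2 ^ (m-2) - 1) j = 0 := by
    intro j hj
    rw [bitZ_eq, bitN_eq_zero]
    · rfl
    · have h1 : (0:ℕ) < 2 ^ (m-2) := Nat.pow_pos (by norm_num)
      have h2 : (2:ℕ) ^ (m-2) ≤ 2 ^ j := Nat.pow_le_pow_right (by norm_num) hj
      omega
  unfold gbf
  rw [hhi (m-2) (le_refl _), hhi (m-1) (by omega)]
  have hsum1 : (∑ i ∈ Finset.range (m - 2), e i * bitZ (2 ^ (m-2) - 1) i)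
      = ∑ i ∈ Finset.range (m-2), e i := by
    refine Finset.sum_congr rfl fun i hi => ?_
    rw [hlow i (mem_range.1 hi), mul_one]
  have hsum2 : (∑ i ∈ Finset.range (m - 2), f i * (1 - bitZ (2 ^ (m-2) - 1) i)) = 0 := by
    refine Finset.sum_eq_zero fun i hi => ?_
    rw [hlow i (mem_range.1 hi)]
    ring
  rw [hsum1, hsum2]
  ring

include hm in
/-- evaluation at the right boundary point -/
lemma eval_q3 :
    gbf m π e f d (bitZ (3 * 2 ^ (m-2))) = 1 + ∑ i ∈ Finset.range (m-2), f i := by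
  have he : (3 * 2 ^ (m-2) : ℕ) = 3 * 2 ^ (m-2) + 0 := by omega
  have hlow : ∀ j, j < m - 2 → bitZ (3 * 2 ^ (m-2)) j = 0 := by
    intro j hj
    rw [he, bitZ_eq, bitN_shift_low' 3 0 hj, bitN_zero]
    rfl
  obtain ⟨hb2, hb1⟩ := high_bits hm (m := m) (c := 3) (x := 0) (Nat.pow_pos (by norm_num))
  rw [← he] at hb2 hb1
  norm_num [show bitN 3 0 = 1 from rfl, show bitN 3 1 = 1 from rfl] at hb2 hb1
  unfold gbf
  rw [hb2, hb1]
  have hsum1 : (∑ i ∈ Finset.range (m - 2), e i * bitZ (3 * 2 ^ (m-2)) i) = 0 := by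
    refine Finset.sum_eq_zero fun i hi => ?_
    rw [hlow i (mem_range.1 hi), mul_zero]
  have hsum2 : (∑ i ∈ Finset.range (m - 2), f i * (1 - bitZ (3 * 2 ^ (m-2)) i))
      = ∑ i ∈ Finset.range (m-2), f i := by
    refine Finset.sum_congr rfl fun i hi => ?_
    rw [hlow i (mem_range.1 hi)]
    ring
  rw [hsum1, hsum2]
  ring
end Eval

/-- set of π-positions where i and j disagree -/
def Dset (n : ℕ) (π : ℕ → ℕ) (i j : ℕ) : Finset ℕ :=
  (range n).filter (fun α => bitN i (π α) ≠ bitN j (π α))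

/-- the flip position selector -/
def gam (n : ℕ) (π : ℕ → ℕ) (i j : ℕ) : ℕ :=
  if h : (Dset n π i j).Nonempty then (Dset n π i j).max' h + 1 else 0

lemma mem_Dset {n : ℕ} {π : ℕ → ℕ} {i j α : ℕ} :
    α ∈ Dset n π i j ↔ α < n ∧ bitN i (π α) ≠ bitN j (π α) := by
  unfold Dset
  rw [mem_filter, mem_range]

lemma gam_lt {n : ℕ} {π : ℕ → ℕ} {i j : ℕ} (hn : 1 ≤ n)
    (h : bitN i (π (n-1)) = bitN j (π (n-1))) : gam n π i j < n := by
  unfold gam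
  split_ifs with hne
  · have hmem := Finset.max'_mem _ hne
    rw [mem_Dset] at hmem
    have : (Dset n π i j).max' hne ≠ n - 1 := by
      intro hc
      rw [hc] at hmem
      exact hmem.2 h
    omega
  · omega

lemma gam_notin {n : ℕ} {π : ℕ → ℕ} {i j : ℕ} : gam n π i j ∉ Dset n π i j := by
  unfold gam
  split_ifs with hne
  · intro hc
    have := Finset.le_max' _ _ hc
    omega
  · intro hc
    exact hne ⟨_, hc⟩

lemma gam_bits_eq {n : ℕ} {π : ℕ → ℕ} {i j : ℕ} (hlt : gam n π i j < n) :
    bitN i (π (gam n π i j)) = bitN j (π (gam n π i j)) := by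
  have := gam_notin (n := n) (π := π) (i := i) (j := j)
  rw [mem_Dset] at this
  push_neg at this
  exact this hlt

lemma gam_pos_facts {n : ℕ} {π : ℕ → ℕ} {i j : ℕ} (hne : (Dset n π i j).Nonempty) :
    1 ≤ gam n π i j ∧ (gam n π i j - 1) ∈ Dset n π i j := by
  unfold gam
  rw [dif_pos hne]
  exact ⟨by omega, by simpa using Finset.max'_mem _ hne⟩

lemma gam_succ_notin {n : ℕ} {π : ℕ → ℕ} {i j : ℕ} :
    gam n π i j + 1 ∉ Dset n π i j := by
  unfold gam
  split_ifs with hne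
  · intro hc
    have := Finset.le_max' _ _ hc
    omega
  · intro hc
    exact hne ⟨_, hc⟩

lemma gam_succ_bits_eq {n : ℕ} {π : ℕ → ℕ} {i j : ℕ} (hlt : gam n π i j + 1 < n) :
    bitN i (π (gam n π i j + 1)) = bitN j (π (gam n π i j + 1)) := by
  have := gam_succ_notin (n := n) (π := π) (i := i) (j := j)
  rw [mem_Dset] at this
  push_neg at this
  exact this hlt

/-- the D-set is invariant under flipping both i and j at a common position -/
lemma Dset_flip {n : ℕ} {π : ℕ → ℕ} {i j β : ℕ} :
    Dset n π (flipB β i) (flipB β j) = Dset n π i j := by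
  unfold Dset
  refine Finset.filter_congr fun α _ => ?_
  by_cases hc : π α = β
  · rw [hc, bitN_flip_self, bitN_flip_self]
    have h1 := bitN_le i β
    have h2 := bitN_le j β
    constructor <;> intro h <;> omega
  · rw [bitN_flip_ne hc, bitN_flip_ne hc]

lemma gam_flip {n : ℕ} {π : ℕ → ℕ} {i j β : ℕ} :
    gam n π (flipB β i) (flipB β j) = gam n π i j := by
  unfold gam
  congr 1 <;> rw [Dset_flip]

/-- numbers below 2^n agreeing on all bits below n are equal -/
lemma nat_eq_of_bits : ∀ (n x y : ℕ), x < 2 ^ n → y < 2 ^ n →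
    (∀ δ, δ < n → bitN x δ = bitN y δ) → x = y := by
  intro n
  induction n with
  | zero => intro x y hx hy _; omega
  | succ n ih =>
    intro x y hx hy hb
    have h0 : x % 2 = y % 2 := by
      have := hb 0 (by omega)
      unfold bitN at this
      simpa using this
    have hbit : ∀ δ, δ < n → bitN (x / 2) δ = bitN (y / 2) δ := by
      intro δ hδ
      have h1 : ∀ z : ℕ, z / 2 / 2 ^ δ = z / 2 ^ (δ + 1) := by
        intro z
        rw [Nat.div_div_eq_div_mul]
        congr 1
        rw [pow_succ]
        ring
      have := hb (δ + 1) (by omega)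
      unfold bitN at this ⊢
      rw [h1 x, h1 y]
      exact this
    have hx2 : x / 2 < 2 ^ n := by
      rw [pow_succ] at hx
      omega
    have hy2 : y / 2 < 2 ^ n := by
      rw [pow_succ] at hy
      omega
    have := ih (x / 2) (y / 2) hx2 hy2 hbit
    omega
section P6
open Finset

/-- combined exponent of the two factors of an autocorrelation term -/
def SS (m : ℕ) (π : ℕ → ℕ) (e f : ℕ → ZMod 2) (τ : ℕ) (d : ZMod 2) (i : ℕ) : ZMod 2 :=
  gbf m π e f d (bitZ i) + gbf m π e f d (bitZ (i + τ))

lemma addhelp1 : ∀ a b c2 d2 : ZMod 2, (a + c2 + d2) + (b + c2 + d2) = a + b := by decide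
lemma addhelp2 : ∀ a b : ZMod 2, (a + 1) + (b + 1) = a + b := by decide

lemma Dset_ne {n : ℕ} {π : ℕ → ℕ} {i j x y c1 c2 : ℕ}
    (hsurj : ∀ δ, δ < n → ∃ α, α < n ∧ π α = δ)
    (hi : i = c1 * 2 ^ n + x) (hj : j = c2 * 2 ^ n + y)
    (hx : x < 2 ^ n) (hy : y < 2 ^ n) (hxy : x ≠ y) :
    (Dset n π i j).Nonempty := by
  by_contra h
  apply hxy
  apply nat_eq_of_bits n x y hx hy
  intro δ hδ
  obtain ⟨α, hα, rfl⟩ := hsurj δ hδ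
  have hnm : α ∉ Dset n π i j := fun hc => h ⟨α, hc⟩
  rw [mem_Dset] at hnm
  push_neg at hnm
  have := hnm hα
  rw [hi, hj] at this
  rwa [bitN_shift_low' c1 x hδ, bitN_shift_low' c2 y hδ] at this

lemma pair11 {m : ℕ} (hm : 4 ≤ m) {π : ℕ → ℕ} (e f : ℕ → ZMod 2)
    (hlt : ∀ a, a < m-2 → π a < m-2)
    (hinj : ∀ a, a < m-2 → ∀ b, b < m-2 → π a = π b → a = b)
    (hsurj : ∀ δ, δ < m-2 → ∃ α, α < m-2 ∧ π α = δ)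
    {τ i : ℕ} (hτ : 1 ≤ τ)
    (hiK : 2^(m-2) ≤ i) (hjK : i + τ < 2*2^(m-2))
    (hbp : bitN i (π (m-3)) = bitN (i+τ) (π (m-3))) :
    flipB (π (gam (m-2) π i (i+τ))) (i+τ) = flipB (π (gam (m-2) π i (i+τ))) i + τ
    ∧ 2^(m-2) ≤ flipB (π (gam (m-2) π i (i+τ))) i
    ∧ flipB (π (gam (m-2) π i (i+τ))) i + τ < 2*2^(m-2)
    ∧ ∀ d : ZMod 2, SS m π e f τ d (flipB (π (gam (m-2) π i (i+τ))) i)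
        = SS m π e f τ d i + 1 := by
  have hn2 : 2 ≤ m - 2 := by omega
  set γ := gam (m-2) π i (i+τ) with hγdef
  set β := π γ with hβdef
  set x := i - 2^(m-2) with hxdef
  set y := i + τ - 2^(m-2) with hydef
  have hx1 : x < 2^(m-2) := by omega
  have hy1 : y < 2^(m-2) := by omega
  have hix : i = 2^(m-2) + x := by omega
  have hjy : i + τ = 2^(m-2) + y := by omega
  have hxy : y = x + τ := by omega
  have hγlt : γ < m - 2 := by
    refine gam_lt (by omega) ?_
    rw [show (m-2) - 1 = m-3 by omega]
    exact hbp
  have hβlt : β < m - 2 := hlt _ hγlt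
  have hβeq : bitN i β = bitN (i+τ) β := gam_bits_eq hγlt
  have hshift : flipB β (i+τ) = flipB β i + τ := flip_shift (by rw [← hβeq]) rfl
  have hxbit : ∀ δ, δ < m-2 → bitN i δ = bitN x δ := by
    intro δ hδ
    rw [show i = 1 * 2^(m-2) + x by omega]
    exact bitN_shift_low' 1 x hδ
  have hybit : ∀ δ, δ < m-2 → bitN (i+τ) δ = bitN y δ := by
    intro δ hδ
    rw [show i + τ = 1 * 2^(m-2) + y by omega]
    exact bitN_shift_low' 1 y hδ
  have hflipi : flipB β i = 2^(m-2) + flipB β x := by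
    rw [show i = 1 * 2^(m-2) + x by omega, flip_quad hx1 hβlt, one_mul]
  have hflipj : flipB β (i+τ) = 2^(m-2) + flipB β y := by
    rw [show i + τ = 1 * 2^(m-2) + y by omega, flip_quad hy1 hβlt, one_mul]
  have hfx : flipB β x < 2^(m-2) := flip_lt hx1 hβlt
  have hfy : flipB β y < 2^(m-2) := flip_lt hy1 hβlt
  have hDne : (Dset (m-2) π i (i+τ)).Nonempty :=
    Dset_ne hsurj (c1 := 1) (c2 := 1) (by omega) (by omega) hx1 hy1 (by omega)
  obtain ⟨hγ1, hγD⟩ := gam_pos_facts hDne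
  refine ⟨hshift, by omega, by rw [← hshift, hflipj]; omega, ?_⟩
  intro d
  -- four evaluations
  have ev1 : gbf m π e f d (bitZ i)
      = qE (m-2) π x + d * bitZ x (π (m-3)) + sE (m-2) e f x := by
    rw [hix]; exact eval_q1 hm π e f d hlt hx1
  have ev2 : gbf m π e f d (bitZ (i + τ))
      = qE (m-2) π y + d * bitZ y (π (m-3)) + sE (m-2) e f y := by
    rw [hjy]; exact eval_q1 hm π e f d hlt hy1
  have ev3 : gbf m π e f d (bitZ (flipB β i))
      = qE (m-2) π (flipB β x) + d * bitZ (flipB β x) (π (m-3)) + sE (m-2) e f (flipB β x) := by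
    rw [hflipi]; exact eval_q1 hm π e f d hlt hfx
  have ev4 : gbf m π e f d (bitZ (flipB β i + τ))
      = qE (m-2) π (flipB β y) + d * bitZ (flipB β y) (π (m-3)) + sE (m-2) e f (flipB β y) := by
    rw [← hshift, hflipj]; exact eval_q1 hm π e f d hlt hfy
  -- qE relation
  have hq1 := qE_flip (m-2) π hinj hγlt x
  have hq2 := qE_flip (m-2) π hinj hγlt y
  have hT1 : (if 1 ≤ γ then bitZ x (π (γ - 1)) else 0)
      + (if 1 ≤ γ then bitZ y (π (γ - 1)) else 0) = 1 := by
    rw [if_pos hγ1, if_pos hγ1]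
    apply zb_sum_of_ne
    have hmem := mem_Dset.1 hγD
    have hδ : π (γ - 1) < m - 2 := hlt _ (by omega)
    rw [← hxbit _ hδ, ← hybit _ hδ]
    exact hmem.2
  have hT2 : (if γ + 1 ≤ m-2-1 then bitZ x (π (γ + 1)) else 0)
      + (if γ + 1 ≤ m-2-1 then bitZ y (π (γ + 1)) else 0) = 0 := by
    by_cases hc : γ + 1 ≤ m-2-1
    · rw [if_pos hc, if_pos hc]
      apply zb_sum_of_eq
      have hδ : π (γ + 1) < m - 2 := hlt _ (by omega)
      rw [← hxbit _ hδ, ← hybit _ hδ]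
      exact gam_succ_bits_eq (by omega)
    · rw [if_neg hc, if_neg hc, add_zero]
  have hqq : qE (m-2) π (flipB β x) + qE (m-2) π (flipB β y)
      = qE (m-2) π x + qE (m-2) π y + 1 := by
    rw [hq1, hq2]
    calc qE (m-2) π x + (if 1 ≤ γ then bitZ x (π (γ - 1)) else 0)
          + (if γ + 1 ≤ m-2-1 then bitZ x (π (γ + 1)) else 0)
          + (qE (m-2) π y + (if 1 ≤ γ then bitZ y (π (γ - 1)) else 0)
          + (if γ + 1 ≤ m-2-1 then bitZ y (π (γ + 1)) else 0))
        = qE (m-2) π x + qE (m-2) π y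
          + ((if 1 ≤ γ then bitZ x (π (γ - 1)) else 0)
            + (if 1 ≤ γ then bitZ y (π (γ - 1)) else 0))
          + ((if γ + 1 ≤ m-2-1 then bitZ x (π (γ + 1)) else 0)
            + (if γ + 1 ≤ m-2-1 then bitZ y (π (γ + 1)) else 0)) := by ring
    _ = qE (m-2) π x + qE (m-2) π y + 1 + 0 := by rw [hT1, hT2]
    _ = qE (m-2) π x + qE (m-2) π y + 1 := by ring
  have hss : sE (m-2) e f (flipB β x) + sE (m-2) e f (flipB β y)
      = sE (m-2) e f x + sE (m-2) e f y := by
    rw [sE_flip _ e f hβlt, sE_flip _ e f hβlt]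
    exact addhelp1 _ _ _ _
  have hbb : bitZ (flipB β x) (π (m-3)) + bitZ (flipB β y) (π (m-3))
      = bitZ x (π (m-3)) + bitZ y (π (m-3)) := by
    by_cases hc : γ = m-3
    · have hpe : π (m-3) = β := by rw [hβdef, hc]
      rw [hpe, zb_flip_self, zb_flip_self]
      exact addhelp2 _ _
    · have hne : π (m-3) ≠ β := by
        rw [hβdef]
        intro hcc
        exact hc (hinj _ hγlt _ (by omega) hcc.symm)
      rw [zb_flip_ne hne, zb_flip_ne hne]
  unfold SS
  rw [ev1, ev2, ev3, ev4]
  calc qE (m-2) π (flipB β x) + d * bitZ (flipB β x) (π (m-3)) + sE (m-2) e f (flipB β x)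
        + (qE (m-2) π (flipB β y) + d * bitZ (flipB β y) (π (m-3)) + sE (m-2) e f (flipB β y))
      = (qE (m-2) π (flipB β x) + qE (m-2) π (flipB β y))
        + d * (bitZ (flipB β x) (π (m-3)) + bitZ (flipB β y) (π (m-3)))
        + (sE (m-2) e f (flipB β x) + sE (m-2) e f (flipB β y)) := by ring
  _ = (qE (m-2) π x + qE (m-2) π y + 1)
        + d * (bitZ x (π (m-3)) + bitZ y (π (m-3)))
        + (sE (m-2) e f x + sE (m-2) e f y) := by rw [hqq, hss, hbb]
  _ = qE (m-2) π x + d * bitZ x (π (m-3)) + sE (m-2) e f x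
        + (qE (m-2) π y + d * bitZ y (π (m-3)) + sE (m-2) e f y) + 1 := by ring
end P6
section P7
open Finset

lemma comphelp1 : ∀ a b : ZMod 2, a + b = 1 → (1 + a) + (1 + b) = 1 := by decide
lemma comphelp2 : ∀ a b : ZMod 2, a = b → (1 + a) + (1 + b) = 0 := by decide
lemma mixhelp1 : ∀ a b : ZMod 2, a + b = 1 → a + (1 + b) = 0 := by decide
lemma mixhelp2 : ∀ a b : ZMod 2, a = b → a + (1 + b) = 1 := by decide
lemma mixhelp3 : ∀ d a b : ZMod 2, d * (a + 1) + (1 - d) * (b + 1) = d * a + (1 - d) * b + 1 := by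
  decide

lemma pair22 {m : ℕ} (hm : 4 ≤ m) {π : ℕ → ℕ} (e f : ℕ → ZMod 2)
    (hlt : ∀ a, a < m-2 → π a < m-2)
    (hinj : ∀ a, a < m-2 → ∀ b, b < m-2 → π a = π b → a = b)
    (hsurj : ∀ δ, δ < m-2 → ∃ α, α < m-2 ∧ π α = δ)
    {τ i : ℕ} (hτ : 1 ≤ τ)
    (hiK : 2*2^(m-2) ≤ i) (hjK : i + τ < 3*2^(m-2))
    (hbp : bitN i (π (m-3)) = bitN (i+τ) (π (m-3))) :
    flipB (π (gam (m-2) π i (i+τ))) (i+τ) = flipB (π (gam (m-2) π i (i+τ))) i + τ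
    ∧ 2*2^(m-2) ≤ flipB (π (gam (m-2) π i (i+τ))) i
    ∧ flipB (π (gam (m-2) π i (i+τ))) i + τ < 3*2^(m-2)
    ∧ ∀ d : ZMod 2, SS m π e f τ d (flipB (π (gam (m-2) π i (i+τ))) i)
        = SS m π e f τ d i + 1 := by
  have hn2 : 2 ≤ m - 2 := by omega
  set γ := gam (m-2) π i (i+τ) with hγdef
  set β := π γ with hβdef
  set x := i - 2*2^(m-2) with hxdef
  set y := i + τ - 2*2^(m-2) with hydef
  have hx1 : x < 2^(m-2) := by omega
  have hy1 : y < 2^(m-2) := by omega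
  have hix : i = 2*2^(m-2) + x := by omega
  have hjy : i + τ = 2*2^(m-2) + y := by omega
  have hγlt : γ < m - 2 := by
    refine gam_lt (by omega) ?_
    rw [show (m-2) - 1 = m-3 by omega]
    exact hbp
  have hβlt : β < m - 2 := hlt _ hγlt
  have hβeq : bitN i β = bitN (i+τ) β := gam_bits_eq hγlt
  have hshift : flipB β (i+τ) = flipB β i + τ := flip_shift (by rw [← hβeq]) rfl
  have hxbit : ∀ δ, δ < m-2 → bitN i δ = bitN x δ := by
    intro δ hδ
    rw [hix]
    exact bitN_shift_low' 2 x hδ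
  have hybit : ∀ δ, δ < m-2 → bitN (i+τ) δ = bitN y δ := by
    intro δ hδ
    rw [hjy]
    exact bitN_shift_low' 2 y hδ
  have hflipi : flipB β i = 2*2^(m-2) + flipB β x := by
    rw [hix, flip_quad hx1 hβlt]
  have hflipj : flipB β (i+τ) = 2*2^(m-2) + flipB β y := by
    rw [hjy, flip_quad hy1 hβlt]
  have hfx : flipB β x < 2^(m-2) := flip_lt hx1 hβlt
  have hfy : flipB β y < 2^(m-2) := flip_lt hy1 hβlt
  have hDne : (Dset (m-2) π i (i+τ)).Nonempty :=
    Dset_ne hsurj (c1 := 2) (c2 := 2) hix hjy hx1 hy1 (by omega)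
  obtain ⟨hγ1, hγD⟩ := gam_pos_facts hDne
  refine ⟨hshift, by omega, by rw [← hshift, hflipj]; omega, ?_⟩
  intro d
  have hKpos := two_pow_pos' (m-2)
  have hcx : (2:ℕ)^(m-2) - 1 - x < 2^(m-2) := by omega
  have hcy : (2:ℕ)^(m-2) - 1 - y < 2^(m-2) := by omega
  have ev1 : gbf m π e f d (bitZ i)
      = qE (m-2) π (2^(m-2) - 1 - x) + (1-d) * bitZ x (π (m-3)) + sE (m-2) e f x := by
    rw [hix]; exact eval_q2 hm π e f d hlt hx1
  have ev2 : gbf m π e f d (bitZ (i + τ))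
      = qE (m-2) π (2^(m-2) - 1 - y) + (1-d) * bitZ y (π (m-3)) + sE (m-2) e f y := by
    rw [hjy]; exact eval_q2 hm π e f d hlt hy1
  have ev3 : gbf m π e f d (bitZ (flipB β i))
      = qE (m-2) π (flipB β (2^(m-2) - 1 - x)) + (1-d) * bitZ (flipB β x) (π (m-3))
        + sE (m-2) e f (flipB β x) := by
    rw [hflipi, eval_q2 hm π e f d hlt hfx, comp_flip hx1 hβlt]
  have ev4 : gbf m π e f d (bitZ (flipB β i + τ))
      = qE (m-2) π (flipB β (2^(m-2) - 1 - y)) + (1-d) * bitZ (flipB β y) (π (m-3))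
        + sE (m-2) e f (flipB β y) := by
    rw [← hshift, hflipj, eval_q2 hm π e f d hlt hfy, comp_flip hy1 hβlt]
  have hq1 := qE_flip (m-2) π hinj hγlt (2^(m-2) - 1 - x)
  have hq2 := qE_flip (m-2) π hinj hγlt (2^(m-2) - 1 - y)
  have hT1 : (if 1 ≤ γ then bitZ (2^(m-2) - 1 - x) (π (γ - 1)) else 0)
      + (if 1 ≤ γ then bitZ (2^(m-2) - 1 - y) (π (γ - 1)) else 0) = 1 := by
    rw [if_pos hγ1, if_pos hγ1]
    have hδ : π (γ - 1) < m - 2 := hlt _ (by omega)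
    rw [zb_comp hx1 hδ, zb_comp hy1 hδ]
    refine comphelp1 _ _ ?_
    apply zb_sum_of_ne
    have hmem := mem_Dset.1 hγD
    rw [← hxbit _ hδ, ← hybit _ hδ]
    exact hmem.2
  have hT2 : (if γ + 1 ≤ m-2-1 then bitZ (2^(m-2) - 1 - x) (π (γ + 1)) else 0)
      + (if γ + 1 ≤ m-2-1 then bitZ (2^(m-2) - 1 - y) (π (γ + 1)) else 0) = 0 := by
    by_cases hc : γ + 1 ≤ m-2-1
    · rw [if_pos hc, if_pos hc]
      have hδ : π (γ + 1) < m - 2 := hlt _ (by omega)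
      rw [zb_comp hx1 hδ, zb_comp hy1 hδ]
      refine comphelp2 _ _ ?_
      apply zb_eq_of_bitN_eq
      rw [← hxbit _ hδ, ← hybit _ hδ]
      exact gam_succ_bits_eq (by omega)
    · rw [if_neg hc, if_neg hc, add_zero]
  have hqq : qE (m-2) π (flipB β (2^(m-2) - 1 - x)) + qE (m-2) π (flipB β (2^(m-2) - 1 - y))
      = qE (m-2) π (2^(m-2) - 1 - x) + qE (m-2) π (2^(m-2) - 1 - y) + 1 := by
    rw [hq1, hq2]
    calc qE (m-2) π (2^(m-2) - 1 - x) + (if 1 ≤ γ then bitZ (2^(m-2) - 1 - x) (π (γ - 1)) else 0)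
          + (if γ + 1 ≤ m-2-1 then bitZ (2^(m-2) - 1 - x) (π (γ + 1)) else 0)
          + (qE (m-2) π (2^(m-2) - 1 - y) + (if 1 ≤ γ then bitZ (2^(m-2) - 1 - y) (π (γ - 1)) else 0)
          + (if γ + 1 ≤ m-2-1 then bitZ (2^(m-2) - 1 - y) (π (γ + 1)) else 0))
        = qE (m-2) π (2^(m-2) - 1 - x) + qE (m-2) π (2^(m-2) - 1 - y)
          + ((if 1 ≤ γ then bitZ (2^(m-2) - 1 - x) (π (γ - 1)) else 0)
            + (if 1 ≤ γ then bitZ (2^(m-2) - 1 - y) (π (γ - 1)) else 0))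
          + ((if γ + 1 ≤ m-2-1 then bitZ (2^(m-2) - 1 - x) (π (γ + 1)) else 0)
            + (if γ + 1 ≤ m-2-1 then bitZ (2^(m-2) - 1 - y) (π (γ + 1)) else 0)) := by ring
    _ = qE (m-2) π (2^(m-2) - 1 - x) + qE (m-2) π (2^(m-2) - 1 - y) + 1 + 0 := by rw [hT1, hT2]
    _ = qE (m-2) π (2^(m-2) - 1 - x) + qE (m-2) π (2^(m-2) - 1 - y) + 1 := by ring
  have hss : sE (m-2) e f (flipB β x) + sE (m-2) e f (flipB β y)
      = sE (m-2) e f x + sE (m-2) e f y := by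
    rw [sE_flip _ e f hβlt, sE_flip _ e f hβlt]
    exact addhelp1 _ _ _ _
  have hbb : bitZ (flipB β x) (π (m-3)) + bitZ (flipB β y) (π (m-3))
      = bitZ x (π (m-3)) + bitZ y (π (m-3)) := by
    by_cases hc : γ = m-3
    · have hpe : π (m-3) = β := by rw [hβdef, hc]
      rw [hpe, zb_flip_self, zb_flip_self]
      exact addhelp2 _ _
    · have hne : π (m-3) ≠ β := by
        rw [hβdef]
        intro hcc
        exact hc (hinj _ hγlt _ (by omega) hcc.symm)
      rw [zb_flip_ne hne, zb_flip_ne hne]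
  unfold SS
  rw [ev1, ev2, ev3, ev4]
  calc qE (m-2) π (flipB β (2^(m-2) - 1 - x)) + (1-d) * bitZ (flipB β x) (π (m-3))
        + sE (m-2) e f (flipB β x)
        + (qE (m-2) π (flipB β (2^(m-2) - 1 - y)) + (1-d) * bitZ (flipB β y) (π (m-3))
          + sE (m-2) e f (flipB β y))
      = (qE (m-2) π (flipB β (2^(m-2) - 1 - x)) + qE (m-2) π (flipB β (2^(m-2) - 1 - y)))
        + (1-d) * (bitZ (flipB β x) (π (m-3)) + bitZ (flipB β y) (π (m-3)))
        + (sE (m-2) e f (flipB β x) + sE (m-2) e f (flipB β y)) := by ring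
  _ = (qE (m-2) π (2^(m-2) - 1 - x) + qE (m-2) π (2^(m-2) - 1 - y) + 1)
        + (1-d) * (bitZ x (π (m-3)) + bitZ y (π (m-3)))
        + (sE (m-2) e f x + sE (m-2) e f y) := by rw [hqq, hss, hbb]
  _ = qE (m-2) π (2^(m-2) - 1 - x) + (1-d) * bitZ x (π (m-3)) + sE (m-2) e f x
        + (qE (m-2) π (2^(m-2) - 1 - y) + (1-d) * bitZ y (π (m-3)) + sE (m-2) e f y) + 1 := by
      ring

lemma pair12 {m : ℕ} (hm : 4 ≤ m) {π : ℕ → ℕ} (e f : ℕ → ZMod 2)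
    (hlt : ∀ a, a < m-2 → π a < m-2)
    (hinj : ∀ a, a < m-2 → ∀ b, b < m-2 → π a = π b → a = b)
    {τ i : ℕ}
    (hiK : 2^(m-2) ≤ i) (hiK2 : i < 2*2^(m-2))
    (hjK : 2*2^(m-2) ≤ i + τ) (hjK2 : i + τ < 3*2^(m-2))
    (hbp : bitN i (π (m-3)) = bitN (i+τ) (π (m-3))) :
    flipB (π (gam (m-2) π i (i+τ))) (i+τ) = flipB (π (gam (m-2) π i (i+τ))) i + τ
    ∧ 2^(m-2) ≤ flipB (π (gam (m-2) π i (i+τ))) i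
    ∧ flipB (π (gam (m-2) π i (i+τ))) i + τ < 3*2^(m-2)
    ∧ ∀ d : ZMod 2, SS m π e f τ d (flipB (π (gam (m-2) π i (i+τ))) i)
        = SS m π e f τ d i + 1 := by
  have hn2 : 2 ≤ m - 2 := by omega
  set γ := gam (m-2) π i (i+τ) with hγdef
  set β := π γ with hβdef
  set x := i - 2^(m-2) with hxdef
  set y := i + τ - 2*2^(m-2) with hydef
  have hx1 : x < 2^(m-2) := by omega
  have hy1 : y < 2^(m-2) := by omega
  have hix : i = 2^(m-2) + x := by omega
  have hjy : i + τ = 2*2^(m-2) + y := by omega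
  have hγlt : γ < m - 2 := by
    refine gam_lt (by omega) ?_
    rw [show (m-2) - 1 = m-3 by omega]
    exact hbp
  have hβlt : β < m - 2 := hlt _ hγlt
  have hβeq : bitN i β = bitN (i+τ) β := gam_bits_eq hγlt
  have hshift : flipB β (i+τ) = flipB β i + τ := flip_shift (by rw [← hβeq]) rfl
  have hxbit : ∀ δ, δ < m-2 → bitN i δ = bitN x δ := by
    intro δ hδ
    rw [show i = 1 * 2^(m-2) + x by omega]
    exact bitN_shift_low' 1 x hδ
  have hybit : ∀ δ, δ < m-2 → bitN (i+τ) δ = bitN y δ := by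
    intro δ hδ
    rw [hjy]
    exact bitN_shift_low' 2 y hδ
  have hflipi : flipB β i = 2^(m-2) + flipB β x := by
    rw [show i = 1 * 2^(m-2) + x by omega, flip_quad hx1 hβlt, one_mul]
  have hflipj : flipB β (i+τ) = 2*2^(m-2) + flipB β y := by
    rw [hjy, flip_quad hy1 hβlt]
  have hfx : flipB β x < 2^(m-2) := flip_lt hx1 hβlt
  have hfy : flipB β y < 2^(m-2) := flip_lt hy1 hβlt
  refine ⟨hshift, by omega, by rw [← hshift, hflipj]; omega, ?_⟩
  intro d
  have hKpos := two_pow_pos' (m-2)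
  have ev1 : gbf m π e f d (bitZ i)
      = qE (m-2) π x + d * bitZ x (π (m-3)) + sE (m-2) e f x := by
    rw [hix]; exact eval_q1 hm π e f d hlt hx1
  have ev2 : gbf m π e f d (bitZ (i + τ))
      = qE (m-2) π (2^(m-2) - 1 - y) + (1-d) * bitZ y (π (m-3)) + sE (m-2) e f y := by
    rw [hjy]; exact eval_q2 hm π e f d hlt hy1
  have ev3 : gbf m π e f d (bitZ (flipB β i))
      = qE (m-2) π (flipB β x) + d * bitZ (flipB β x) (π (m-3)) + sE (m-2) e f (flipB β x) := by
    rw [hflipi]; exact eval_q1 hm π e f d hlt hfx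
  have ev4 : gbf m π e f d (bitZ (flipB β i + τ))
      = qE (m-2) π (flipB β (2^(m-2) - 1 - y)) + (1-d) * bitZ (flipB β y) (π (m-3))
        + sE (m-2) e f (flipB β y) := by
    rw [← hshift, hflipj, eval_q2 hm π e f d hlt hfy, comp_flip hy1 hβlt]
  have hq1 := qE_flip (m-2) π hinj hγlt x
  have hq2 := qE_flip (m-2) π hinj hγlt (2^(m-2) - 1 - y)
  -- if γ ≥ 1 then D is nonempty and γ-1 ∈ D
  have hγpos : 1 ≤ γ → (γ - 1) ∈ Dset (m-2) π i (i+τ) := by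
    intro h1
    by_cases hDne : (Dset (m-2) π i (i+τ)).Nonempty
    · exact (gam_pos_facts hDne).2
    · exfalso
      have : γ = 0 := by rw [hγdef]; unfold gam; rw [dif_neg hDne]
      omega
  have hT1 : (if 1 ≤ γ then bitZ x (π (γ - 1)) else 0)
      + (if 1 ≤ γ then bitZ (2^(m-2) - 1 - y) (π (γ - 1)) else 0) = 0 := by
    by_cases h1 : 1 ≤ γ
    · rw [if_pos h1, if_pos h1]
      have hδ : π (γ - 1) < m - 2 := hlt _ (by omega)
      rw [zb_comp hy1 hδ]
      refine mixhelp1 _ _ ?_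
      apply zb_sum_of_ne
      have hmem := mem_Dset.1 (hγpos h1)
      rw [← hxbit _ hδ, ← hybit _ hδ]
      exact hmem.2
    · rw [if_neg h1, if_neg h1, add_zero]
  have hT2 : (if γ + 1 ≤ m-2-1 then bitZ x (π (γ + 1)) else 0)
      + (if γ + 1 ≤ m-2-1 then bitZ (2^(m-2) - 1 - y) (π (γ + 1)) else 0)
      = if γ = m-3 then 0 else 1 := by
    by_cases hc : γ + 1 ≤ m-2-1
    · rw [if_pos hc, if_pos hc, if_neg (by omega)]
      have hδ : π (γ + 1) < m - 2 := hlt _ (by omega)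
      rw [zb_comp hy1 hδ]
      refine mixhelp2 _ _ ?_
      apply zb_eq_of_bitN_eq
      rw [← hxbit _ hδ, ← hybit _ hδ]
      exact gam_succ_bits_eq (by omega)
    · rw [if_neg hc, if_neg hc, if_pos (by omega), add_zero]
  have hbzp : d * bitZ (flipB β x) (π (m-3)) + (1-d) * bitZ (flipB β y) (π (m-3))
      = d * bitZ x (π (m-3)) + (1-d) * bitZ y (π (m-3)) + (if γ = m-3 then 1 else 0) := by
    by_cases hc : γ = m-3
    · have hpe : π (m-3) = β := by rw [hβdef, hc]
      rw [if_pos hc, hpe, zb_flip_self, zb_flip_self]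
      exact mixhelp3 _ _ _
    · have hne : π (m-3) ≠ β := by
        rw [hβdef]
        intro hcc
        exact hc (hinj _ hγlt _ (by omega) hcc.symm)
      rw [if_neg hc, zb_flip_ne hne, zb_flip_ne hne, add_zero]
  have hss : sE (m-2) e f (flipB β x) + sE (m-2) e f (flipB β y)
      = sE (m-2) e f x + sE (m-2) e f y := by
    rw [sE_flip _ e f hβlt, sE_flip _ e f hβlt]
    exact addhelp1 _ _ _ _
  have hqq : qE (m-2) π (flipB β x) + qE (m-2) π (flipB β (2^(m-2) - 1 - y))
      = qE (m-2) π x + qE (m-2) π (2^(m-2) - 1 - y) + (if γ = m-3 then 0 else 1) := by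
    rw [hq1, hq2]
    calc qE (m-2) π x + (if 1 ≤ γ then bitZ x (π (γ - 1)) else 0)
          + (if γ + 1 ≤ m-2-1 then bitZ x (π (γ + 1)) else 0)
          + (qE (m-2) π (2^(m-2) - 1 - y)
            + (if 1 ≤ γ then bitZ (2^(m-2) - 1 - y) (π (γ - 1)) else 0)
            + (if γ + 1 ≤ m-2-1 then bitZ (2^(m-2) - 1 - y) (π (γ + 1)) else 0))
        = qE (m-2) π x + qE (m-2) π (2^(m-2) - 1 - y)
          + ((if 1 ≤ γ then bitZ x (π (γ - 1)) else 0)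
            + (if 1 ≤ γ then bitZ (2^(m-2) - 1 - y) (π (γ - 1)) else 0))
          + ((if γ + 1 ≤ m-2-1 then bitZ x (π (γ + 1)) else 0)
            + (if γ + 1 ≤ m-2-1 then bitZ (2^(m-2) - 1 - y) (π (γ + 1)) else 0)) := by ring
    _ = qE (m-2) π x + qE (m-2) π (2^(m-2) - 1 - y) + 0 + (if γ = m-3 then 0 else 1) := by
        rw [hT1, hT2]
    _ = qE (m-2) π x + qE (m-2) π (2^(m-2) - 1 - y) + (if γ = m-3 then 0 else 1) := by ring
  have hifs : (if γ = m-3 then (0:ZMod 2) else 1) + (if γ = m-3 then (1:ZMod 2) else 0) = 1 := by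
    split_ifs <;> ring
  unfold SS
  rw [ev1, ev2, ev3, ev4]
  calc qE (m-2) π (flipB β x) + d * bitZ (flipB β x) (π (m-3)) + sE (m-2) e f (flipB β x)
        + (qE (m-2) π (flipB β (2^(m-2) - 1 - y)) + (1-d) * bitZ (flipB β y) (π (m-3))
          + sE (m-2) e f (flipB β y))
      = (qE (m-2) π (flipB β x) + qE (m-2) π (flipB β (2^(m-2) - 1 - y)))
        + (d * bitZ (flipB β x) (π (m-3)) + (1-d) * bitZ (flipB β y) (π (m-3)))
        + (sE (m-2) e f (flipB β x) + sE (m-2) e f (flipB β y)) := by ring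
  _ = (qE (m-2) π x + qE (m-2) π (2^(m-2) - 1 - y) + (if γ = m-3 then 0 else 1))
        + (d * bitZ x (π (m-3)) + (1-d) * bitZ y (π (m-3)) + (if γ = m-3 then 1 else 0))
        + (sE (m-2) e f x + sE (m-2) e f y) := by rw [hqq, hss, hbzp]
  _ = qE (m-2) π x + d * bitZ x (π (m-3)) + sE (m-2) e f x
        + (qE (m-2) π (2^(m-2) - 1 - y) + (1-d) * bitZ y (π (m-3)) + sE (m-2) e f y)
        + ((if γ = m-3 then (0:ZMod 2) else 1) + (if γ = m-3 then (1:ZMod 2) else 0)) := by ring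
  _ = qE (m-2) π x + d * bitZ x (π (m-3)) + sE (m-2) e f x
        + (qE (m-2) π (2^(m-2) - 1 - y) + (1-d) * bitZ y (π (m-3)) + sE (m-2) e f y) + 1 := by
      rw [hifs]
end P7
section P8
open Finset

lemma bdhelp : ∀ q s1 s2 E F d : ZMod 2, s1 + s2 = E + F →
    q + (1-d)*0 + s1 + (1 + F) = d + E + (q + d*1 + s2) + 1 := by decide
lemma z3bhelp : ∀ q s F : ZMod 2,
    q + (1-1)*1 + s + (1+F) = q + (1-0)*1 + s + (1+F) + 1 := by decide
lemma zi11help : ∀ qx qy sx sy a b : ZMod 2, a + b = 1 →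
    qx + 1*a + sx + (qy + 1*b + sy) = qx + 0*a + sx + (qy + 0*b + sy) + 1 := by decide
lemma zi22help : ∀ qx qy sx sy a b : ZMod 2, a + b = 1 →
    qx + (1-1)*a + sx + (qy + (1-1)*b + sy) = qx + (1-0)*a + sx + (qy + (1-0)*b + sy) + 1 := by
  decide
lemma zi12help : ∀ qx qy sx sy a b : ZMod 2, a + b = 1 →
    qx + 1*a + sx + (qy + (1-1)*b + sy) = qx + 0*a + sx + (qy + (1-0)*b + sy) + 1 := by decide

variable {m : ℕ} (hm : 4 ≤ m) {π : ℕ → ℕ} (e f : ℕ → ZMod 2)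
  (hlt : ∀ a, a < m-2 → π a < m-2)

include hm hlt in
/-- boundary pairing: left boundary with right boundary, τ ≤ K, p-bit of τ-1 set -/
lemma pairB {τ : ℕ} (hτ1 : 1 ≤ τ) (hτK : τ ≤ 2^(m-2))
    (hb1 : bitN (τ-1) (π (m-3)) = 1) :
    ∀ d : ZMod 2, SS m π e f τ d (3*2^(m-2) - τ) = SS m π e f τ d (2^(m-2) - 1) + 1 := by
  intro d
  have hKpos := two_pow_pos' (m-2)
  have hp : π (m-3) < m-2 := hlt _ (by omega)
  have hy1 : τ - 1 < 2^(m-2) := by omega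
  have hx1 : 2^(m-2) - τ < 2^(m-2) := by omega
  have hcomp : (2:ℕ)^(m-2) - 1 - (2^(m-2) - τ) = τ - 1 := by omega
  have hb0 : bitN (2^(m-2) - τ) (π (m-3)) = 0 := by
    have := comp_bit (x := τ - 1) hy1 hp
    rw [show 2^(m-2) - 1 - (τ-1) = 2^(m-2) - τ by omega] at this
    omega
  have hbz0 : bitZ (2^(m-2) - τ) (π (m-3)) = 0 := by
    rw [bitZ_eq, hb0]; norm_num
  have hbz1 : bitZ (τ - 1) (π (m-3)) = 1 := by
    rw [bitZ_eq, hb1]; norm_num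
  have hsE : sE (m-2) e f (2^(m-2) - τ) + sE (m-2) e f (τ - 1)
      = (∑ i ∈ range (m-2), e i) + (∑ i ∈ range (m-2), f i) := by
    have := sE_comp (n := m-2) e f (x := τ - 1) hy1
    rwa [show 2^(m-2) - 1 - (τ-1) = 2^(m-2) - τ by omega] at this
  unfold SS
  rw [show 3*2^(m-2) - τ + τ = 3*2^(m-2) by omega]
  rw [show (3:ℕ)*2^(m-2) - τ = 2*2^(m-2) + (2^(m-2) - τ) by omega]
  rw [show (2:ℕ)^(m-2) - 1 + τ = 2^(m-2) + (τ - 1) by omega]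
  rw [eval_q2 hm π e f d hlt hx1, eval_q3 hm π e f d, eval_q0 hm π e f d,
    eval_q1 hm π e f d hlt hy1]
  rw [hcomp, hbz0, hbz1]
  exact bdhelp _ _ _ _ _ _ hsE

include hm hlt in
/-- left boundary self-zero, τ ≤ K case -/
lemma zero0b {τ : ℕ} (hτ1 : 1 ≤ τ) (hτK : τ ≤ 2^(m-2))
    (hb0 : bitN (τ-1) (π (m-3)) = 0) :
    SS m π e f τ 1 (2^(m-2) - 1) = SS m π e f τ 0 (2^(m-2) - 1) + 1 := by
  have hKpos := two_pow_pos' (m-2)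
  have hy1 : τ - 1 < 2^(m-2) := by omega
  have hbz0 : bitZ (τ - 1) (π (m-3)) = 0 := by rw [bitZ_eq, hb0]; norm_num
  unfold SS
  rw [show (2:ℕ)^(m-2) - 1 + τ = 2^(m-2) + (τ - 1) by omega]
  rw [eval_q0 hm π e f 1, eval_q0 hm π e f 0, eval_q1 hm π e f 1 hlt hy1,
    eval_q1 hm π e f 0 hlt hy1, hbz0]
  ring

include hm hlt in
/-- left boundary self-zero, τ > K case -/
lemma zero0c {τ : ℕ} (hτK : 2^(m-2) + 1 ≤ τ) (hτZ : τ - 2^(m-2) - 1 < 2^(π (m-3))) :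
    SS m π e f τ 1 (2^(m-2) - 1) = SS m π e f τ 0 (2^(m-2) - 1) + 1 := by
  have hKpos := two_pow_pos' (m-2)
  have hp : π (m-3) < m-2 := hlt _ (by omega)
  have hpow : (2:ℕ)^(π (m-3)) ≤ 2^(m-2) := Nat.pow_le_pow_right (by norm_num) (by omega)
  have hy1 : τ - 2^(m-2) - 1 < 2^(m-2) := by omega
  have hb0 : bitN (τ - 2^(m-2) - 1) (π (m-3)) = 0 := bitN_eq_zero _ _ hτZ
  have hbz0 : bitZ (τ - 2^(m-2) - 1) (π (m-3)) = 0 := by rw [bitZ_eq, hb0]; norm_num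
  unfold SS
  rw [show (2:ℕ)^(m-2) - 1 + τ = 2*2^(m-2) + (τ - 2^(m-2) - 1) by omega]
  rw [eval_q0 hm π e f 1, eval_q0 hm π e f 0, eval_q2 hm π e f 1 hlt hy1,
    eval_q2 hm π e f 0 hlt hy1, hbz0]
  ring

include hm hlt in
/-- right boundary self-zero, τ ≤ K case -/
lemma zero3b {τ : ℕ} (hτ1 : 1 ≤ τ) (hτK : τ ≤ 2^(m-2))
    (hb0 : bitN (τ-1) (π (m-3)) = 0) :
    SS m π e f τ 1 (3*2^(m-2) - τ) = SS m π e f τ 0 (3*2^(m-2) - τ) + 1 := by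
  have hKpos := two_pow_pos' (m-2)
  have hp : π (m-3) < m-2 := hlt _ (by omega)
  have hy1 : τ - 1 < 2^(m-2) := by omega
  have hx1 : 2^(m-2) - τ < 2^(m-2) := by omega
  have hb1 : bitN (2^(m-2) - τ) (π (m-3)) = 1 := by
    have := comp_bit (x := τ - 1) hy1 hp
    rw [show 2^(m-2) - 1 - (τ-1) = 2^(m-2) - τ by omega] at this
    omega
  have hbz1 : bitZ (2^(m-2) - τ) (π (m-3)) = 1 := by rw [bitZ_eq, hb1]; norm_num
  unfold SS
  rw [show 3*2^(m-2) - τ + τ = 3*2^(m-2) by omega]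
  rw [show (3:ℕ)*2^(m-2) - τ = 2*2^(m-2) + (2^(m-2) - τ) by omega]
  rw [eval_q2 hm π e f 1 hlt hx1, eval_q2 hm π e f 0 hlt hx1,
    eval_q3 hm π e f 1, eval_q3 hm π e f 0, hbz1]
  exact z3bhelp _ _ _

include hm hlt in
/-- right boundary self-zero, τ > K case -/
lemma zero3c {τ : ℕ} (hτK : 2^(m-2) + 1 ≤ τ) (hτ2K : τ ≤ 2*2^(m-2))
    (hτZ : τ - 2^(m-2) - 1 < 2^(π (m-3))) :
    SS m π e f τ 1 (3*2^(m-2) - τ) = SS m π e f τ 0 (3*2^(m-2) - τ) + 1 := by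
  have hKpos := two_pow_pos' (m-2)
  have hp : π (m-3) < m-2 := hlt _ (by omega)
  have hpow : (2:ℕ)^(π (m-3)) ≤ 2^(m-2) := Nat.pow_le_pow_right (by norm_num) (by omega)
  have hy1 : τ - 2^(m-2) - 1 < 2^(m-2) := by omega
  have hx1 : 2*2^(m-2) - τ < 2^(m-2) := by omega
  have hb0 : bitN (τ - 2^(m-2) - 1) (π (m-3)) = 0 := bitN_eq_zero _ _ hτZ
  have hb1 : bitN (2*2^(m-2) - τ) (π (m-3)) = 1 := by
    have := comp_bit (x := τ - 2^(m-2) - 1) hy1 hp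
    rw [show 2^(m-2) - 1 - (τ - 2^(m-2) - 1) = 2*2^(m-2) - τ by omega] at this
    omega
  have hbz1 : bitZ (2*2^(m-2) - τ) (π (m-3)) = 1 := by rw [bitZ_eq, hb1]; norm_num
  unfold SS
  rw [show 3*2^(m-2) - τ + τ = 3*2^(m-2) by omega]
  rw [show (3:ℕ)*2^(m-2) - τ = 2^(m-2) + (2*2^(m-2) - τ) by omega]
  rw [eval_q1 hm π e f 1 hlt hx1, eval_q1 hm π e f 0 hlt hx1,
    eval_q3 hm π e f 1, eval_q3 hm π e f 0, hbz1]
  ring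

include hm hlt in
/-- internal self-zero, quadrants (1,1) -/
lemma zeroI11 {τ i : ℕ} (hiK : 2^(m-2) ≤ i) (hjK : i + τ < 2*2^(m-2))
    (hbp : bitN i (π (m-3)) ≠ bitN (i+τ) (π (m-3))) :
    SS m π e f τ 1 i = SS m π e f τ 0 i + 1 := by
  have hp : π (m-3) < m-2 := hlt _ (by omega)
  set x := i - 2^(m-2) with hxdef
  set y := i + τ - 2^(m-2) with hydef
  have hx1 : x < 2^(m-2) := by omega
  have hy1 : y < 2^(m-2) := by omega
  have hbxy : bitZ x (π (m-3)) + bitZ y (π (m-3)) = 1 := by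
    apply zb_sum_of_ne
    intro hc
    apply hbp
    rw [show i + τ = 1*2^(m-2) + y by omega, show i = 1*2^(m-2) + x by omega,
      bitN_shift_low' 1 x hp, bitN_shift_low' 1 y hp]
    exact hc
  unfold SS
  rw [show i = 2^(m-2) + x by omega, show 2^(m-2) + x + τ = 2^(m-2) + y by omega]
  rw [eval_q1 hm π e f 1 hlt hx1, eval_q1 hm π e f 0 hlt hx1,
    eval_q1 hm π e f 1 hlt hy1, eval_q1 hm π e f 0 hlt hy1]
  exact zi11help _ _ _ _ _ _ hbxy

include hm hlt in
/-- internal self-zero, quadrants (2,2) -/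
lemma zeroI22 {τ i : ℕ} (hiK : 2*2^(m-2) ≤ i) (hjK : i + τ < 3*2^(m-2))
    (hbp : bitN i (π (m-3)) ≠ bitN (i+τ) (π (m-3))) :
    SS m π e f τ 1 i = SS m π e f τ 0 i + 1 := by
  have hp : π (m-3) < m-2 := hlt _ (by omega)
  set x := i - 2*2^(m-2) with hxdef
  set y := i + τ - 2*2^(m-2) with hydef
  have hx1 : x < 2^(m-2) := by omega
  have hy1 : y < 2^(m-2) := by omega
  have hbxy : bitZ x (π (m-3)) + bitZ y (π (m-3)) = 1 := by
    apply zb_sum_of_ne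
    intro hc
    apply hbp
    rw [show i + τ = 2*2^(m-2) + y by omega, show i = 2*2^(m-2) + x by omega,
      bitN_shift_low' 2 x hp, bitN_shift_low' 2 y hp]
    exact hc
  unfold SS
  rw [show i = 2*2^(m-2) + x by omega, show 2*2^(m-2) + x + τ = 2*2^(m-2) + y by omega]
  rw [eval_q2 hm π e f 1 hlt hx1, eval_q2 hm π e f 0 hlt hx1,
    eval_q2 hm π e f 1 hlt hy1, eval_q2 hm π e f 0 hlt hy1]
  exact zi22help _ _ _ _ _ _ hbxy

include hm hlt in
/-- internal self-zero, quadrants (1,2) -/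
lemma zeroI12 {τ i : ℕ} (hiK : 2^(m-2) ≤ i) (hiK2 : i < 2*2^(m-2))
    (hjK : 2*2^(m-2) ≤ i + τ) (hjK2 : i + τ < 3*2^(m-2))
    (hbp : bitN i (π (m-3)) ≠ bitN (i+τ) (π (m-3))) :
    SS m π e f τ 1 i = SS m π e f τ 0 i + 1 := by
  have hp : π (m-3) < m-2 := hlt _ (by omega)
  set x := i - 2^(m-2) with hxdef
  set y := i + τ - 2*2^(m-2) with hydef
  have hx1 : x < 2^(m-2) := by omega
  have hy1 : y < 2^(m-2) := by omega
  have hbxy : bitZ x (π (m-3)) + bitZ y (π (m-3)) = 1 := by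
    apply zb_sum_of_ne
    intro hc
    apply hbp
    rw [show i + τ = 2*2^(m-2) + y by omega, show i = 1*2^(m-2) + x by omega,
      bitN_shift_low' 1 x hp, bitN_shift_low' 2 y hp]
    exact hc
  unfold SS
  rw [show i = 2^(m-2) + x by omega, show 2^(m-2) + x + τ = 2*2^(m-2) + y by omega]
  rw [eval_q1 hm π e f 1 hlt hx1, eval_q1 hm π e f 0 hlt hx1,
    eval_q2 hm π e f 1 hlt hy1, eval_q2 hm π e f 0 hlt hy1]
  exact zi12help _ _ _ _ _ _ hbxy
end P8
section P9
open Finset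


/-- the involution on window positions -/
def invol (m : ℕ) (π : ℕ → ℕ) (τ k : ℕ) : ℕ :=
  if (2^(m-2) - 1 + k = 2^(m-2) - 1) ∨ (2^(m-2) - 1 + k + τ = 3*2^(m-2)) then
    (if τ ≤ 2^(m-2) ∧ bitN (τ-1) (π (m-3)) = 1 then 2*2^(m-2) + 1 - τ - k else k)
  else if bitN (2^(m-2) - 1 + k) (π (m-3)) = bitN (2^(m-2) - 1 + k + τ) (π (m-3)) then
    flipB (π (gam (m-2) π (2^(m-2) - 1 + k) (2^(m-2) - 1 + k + τ))) (2^(m-2) - 1 + k)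
      - (2^(m-2) - 1)
  else k

/-- the generic term of the sum ρ_a(τ) + ρ_b(τ) -/
def FF (m : ℕ) (π : ℕ → ℕ) (e f : ℕ → ZMod 2) (τ k : ℕ) : ℤ :=
  neg1 (SS m π e f τ 0 (2^(m-2) - 1 + k)) + neg1 (SS m π e f τ 1 (2^(m-2) - 1 + k))

lemma cancel4 {A B A' B' : ZMod 2} (h0 : A' = A + 1) (h1 : B' = B + 1) :
    (neg1 A + neg1 B) + (neg1 A' + neg1 B') = 0 := by
  have u := neg1_cancel A A' h0
  have v := neg1_cancel B B' h1
  omega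

lemma zeroFF {A B : ZMod 2} (h : B = A + 1) : neg1 A + neg1 B = 0 := neg1_cancel _ _ h

lemma master {m : ℕ} (hm : 4 ≤ m) {π : ℕ → ℕ} (e f : ℕ → ZMod 2)
    (hlt : ∀ a, a < m-2 → π a < m-2)
    (hinj : ∀ a, a < m-2 → ∀ b, b < m-2 → π a = π b → a = b)
    (hsurj : ∀ δ, δ < m-2 → ∃ α, α < m-2 ∧ π α = δ)
    {τ : ℕ} (hτ1 : 1 ≤ τ) (hτ2 : τ ≤ 2^(m-2) + 2^(π (m-3)))
    {k : ℕ} (hk : k ∈ Finset.range (2^(m-1) + 2 - τ)) :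
    (FF m π e f τ k + FF m π e f τ (invol m π τ k) = 0)
    ∧ invol m π τ k ∈ Finset.range (2^(m-1) + 2 - τ)
    ∧ invol m π τ (invol m π τ k) = k
    ∧ (FF m π e f τ k ≠ 0 → invol m π τ k ≠ k) := by
  have hKpos := two_pow_pos' (m-2)
  have hp : π (m-3) < m-2 := hlt _ (by omega)
  have hNK : (2:ℕ)^(m-1) = 2*2^(m-2) := by rw [show m-1 = (m-2)+1 by omega, pow_succ]; ring
  have hpow2 : 2*2^(m-3) = 2^(m-2) := by rw [show m-2 = (m-3)+1 by omega, pow_succ]; ring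
  have hppow : (2:ℕ)^(π (m-3)) ≤ 2^(m-3) := Nat.pow_le_pow_right (by norm_num) (by omega)
  have hpm3pos := two_pow_pos' (m-3)
  have hτlt : τ < 2*2^(m-2) := by omega
  rw [Finset.mem_range, hNK] at hk
  by_cases hA : (2^(m-2) - 1 + k = 2^(m-2) - 1) ∨ (2^(m-2) - 1 + k + τ = 3*2^(m-2))
  · -- boundary cases
    by_cases hC : τ ≤ 2^(m-2) ∧ bitN (τ-1) (π (m-3)) = 1
    · -- boundary pairing
      have hone : invol m π τ k = 2*2^(m-2) + 1 - τ - k := by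
        unfold invol; rw [if_pos hA, if_pos hC]
      have hk0 : k = 0 ∨ k = 2*2^(m-2) + 1 - τ := by omega
      have hpair := pairB hm e f hlt hτ1 hC.1 hC.2
      rcases hk0 with rfl | hkr
      · -- left boundary point
        rw [hone]
        refine ⟨?_, ?_, ?_, ?_⟩
        · unfold FF
          rw [show 2^(m-2) - 1 + 0 = 2^(m-2) - 1 by omega,
            show 2^(m-2) - 1 + (2*2^(m-2) + 1 - τ - 0) = 3*2^(m-2) - τ by omega]
          exact cancel4 (hpair 0) (hpair 1)
        · rw [Finset.mem_range, hNK]; omega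
        · unfold invol
          rw [if_pos (Or.inr (by omega)), if_pos hC]
          omega
        · intro _; omega
      · -- right boundary point
        rw [hone, hkr]
        refine ⟨?_, ?_, ?_, ?_⟩
        · unfold FF
          rw [show 2^(m-2) - 1 + (2*2^(m-2) + 1 - τ) = 3*2^(m-2) - τ by omega,
            show 2^(m-2) - 1 + (2*2^(m-2) + 1 - τ - (2*2^(m-2) + 1 - τ)) = 2^(m-2) - 1 by omega]
          have := cancel4 (hpair 0) (hpair 1)
          omega
        · rw [Finset.mem_range, hNK]; omega
        · unfold invol
          rw [if_pos (Or.inl (by omega)), if_pos hC]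
          omega
        · intro _; omega
    · -- boundary self-zero
      have hone : invol m π τ k = k := by
        unfold invol; rw [if_pos hA, if_neg hC]
      have hFF : FF m π e f τ k = 0 := by
        have hbit := bitN_le (τ-1) (π (m-3))
        rcases hA with hA1 | hA2
        · have hk0 : k = 0 := by omega
          subst hk0
          unfold FF
          rw [show 2^(m-2) - 1 + 0 = 2^(m-2) - 1 by omega]
          rcases le_or_gt τ (2^(m-2)) with hτK | hτK
          · exact zeroFF (zero0b hm e f hlt hτ1 hτK (by omega))
          · exact zeroFF (zero0c hm e f hlt (by omega) (by omega))
        · unfold FF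
          rw [show 2^(m-2) - 1 + k = 3*2^(m-2) - τ by omega]
          rcases le_or_gt τ (2^(m-2)) with hτK | hτK
          · exact zeroFF (zero3b hm e f hlt hτ1 hτK (by omega))
          · exact zeroFF (zero3c hm e f hlt (by omega) (by omega) (by omega))
      rw [hone]
      exact ⟨by omega, by rw [Finset.mem_range, hNK]; exact hk, by rw [hone],
        fun h => absurd hFF h⟩
  · -- internal cases
    push_neg at hA
    obtain ⟨hA1, hA2⟩ := hA
    have hi1 : 2^(m-2) ≤ 2^(m-2) - 1 + k := by omega
    have hi2 : 2^(m-2) - 1 + k + τ < 3*2^(m-2) := by omega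
    by_cases hB : bitN (2^(m-2) - 1 + k) (π (m-3)) = bitN (2^(m-2) - 1 + k + τ) (π (m-3))
    · -- flip pairing
      have key : flipB (π (gam (m-2) π (2^(m-2) - 1 + k) (2^(m-2) - 1 + k + τ)))
            (2^(m-2) - 1 + k + τ)
          = flipB (π (gam (m-2) π (2^(m-2) - 1 + k) (2^(m-2) - 1 + k + τ))) (2^(m-2) - 1 + k) + τ
          ∧ 2^(m-2) ≤ flipB (π (gam (m-2) π (2^(m-2) - 1 + k) (2^(m-2) - 1 + k + τ)))
            (2^(m-2) - 1 + k)
          ∧ flipB (π (gam (m-2) π (2^(m-2) - 1 + k) (2^(m-2) - 1 + k + τ))) (2^(m-2) - 1 + k) + τ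
            < 3*2^(m-2)
          ∧ ∀ d : ZMod 2, SS m π e f τ d
              (flipB (π (gam (m-2) π (2^(m-2) - 1 + k) (2^(m-2) - 1 + k + τ))) (2^(m-2) - 1 + k))
            = SS m π e f τ d (2^(m-2) - 1 + k) + 1 := by
        rcases lt_or_ge (2^(m-2) - 1 + k + τ) (2*2^(m-2)) with hq | hq
        · obtain ⟨h1, h2, h3, h4⟩ := pair11 hm e f hlt hinj hsurj hτ1 hi1 hq hB
          exact ⟨h1, h2, by omega, h4⟩
        · rcases le_or_gt (2*2^(m-2)) (2^(m-2) - 1 + k) with hq2 | hq2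
          · obtain ⟨h1, h2, h3, h4⟩ := pair22 hm e f hlt hinj hsurj hτ1 hq2 hi2 hB
            exact ⟨h1, by omega, h3, h4⟩
          · exact pair12 hm e f hlt hinj hi1 hq2 hq hi2 hB
      obtain ⟨hshift, hlo, hhi, hSS⟩ := key
      have hone : invol m π τ k
          = flipB (π (gam (m-2) π (2^(m-2) - 1 + k) (2^(m-2) - 1 + k + τ))) (2^(m-2) - 1 + k)
            - (2^(m-2) - 1) := by
        unfold invol
        rw [if_neg (by omega), if_pos hB]
      rw [hone]
      have hB' : bitN (flipB (π (gam (m-2) π (2^(m-2) - 1 + k) (2^(m-2) - 1 + k + τ)))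
            (2^(m-2) - 1 + k)) (π (m-3))
          = bitN (flipB (π (gam (m-2) π (2^(m-2) - 1 + k) (2^(m-2) - 1 + k + τ)))
            (2^(m-2) - 1 + k) + τ) (π (m-3)) := by
        rw [← hshift]
        by_cases hpe : π (m-3) = π (gam (m-2) π (2^(m-2) - 1 + k) (2^(m-2) - 1 + k + τ))
        · rw [hpe] at hB
          rw [hpe, bitN_flip_self, bitN_flip_self, hB]
        · rw [bitN_flip_ne hpe, bitN_flip_ne hpe]
          exact hB
      have hgam : gam (m-2) π
            (flipB (π (gam (m-2) π (2^(m-2) - 1 + k) (2^(m-2) - 1 + k + τ))) (2^(m-2) - 1 + k))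
            (flipB (π (gam (m-2) π (2^(m-2) - 1 + k) (2^(m-2) - 1 + k + τ))) (2^(m-2) - 1 + k) + τ)
          = gam (m-2) π (2^(m-2) - 1 + k) (2^(m-2) - 1 + k + τ) := by
        rw [← hshift]
        exact gam_flip
      refine ⟨?_, ?_, ?_, ?_⟩
      · unfold FF
        rw [show 2^(m-2) - 1
              + (flipB (π (gam (m-2) π (2^(m-2) - 1 + k) (2^(m-2) - 1 + k + τ))) (2^(m-2) - 1 + k)
              - (2^(m-2) - 1))
            = flipB (π (gam (m-2) π (2^(m-2) - 1 + k) (2^(m-2) - 1 + k + τ))) (2^(m-2) - 1 + k)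
            by omega]
        exact cancel4 (hSS 0) (hSS 1)
      · rw [Finset.mem_range, hNK]; omega
      · unfold invol
        rw [show 2^(m-2) - 1
              + (flipB (π (gam (m-2) π (2^(m-2) - 1 + k) (2^(m-2) - 1 + k + τ))) (2^(m-2) - 1 + k)
              - (2^(m-2) - 1))
            = flipB (π (gam (m-2) π (2^(m-2) - 1 + k) (2^(m-2) - 1 + k + τ))) (2^(m-2) - 1 + k)
            by omega]
        rw [if_neg (by omega), if_pos hB', hgam, flipB_flipB]
        omega
      · intro _
        have := flip_ne (π (gam (m-2) π (2^(m-2) - 1 + k) (2^(m-2) - 1 + k + τ)))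
          (2^(m-2) - 1 + k)
        omega
    · -- internal self-zero
      have hone : invol m π τ k = k := by
        unfold invol; rw [if_neg (by omega), if_neg hB]
      have hFF : FF m π e f τ k = 0 := by
        unfold FF
        rcases lt_or_ge (2^(m-2) - 1 + k + τ) (2*2^(m-2)) with hq | hq
        · exact zeroFF (zeroI11 hm e f hlt hi1 hq hB)
        · rcases le_or_gt (2*2^(m-2)) (2^(m-2) - 1 + k) with hq2 | hq2
          · exact zeroFF (zeroI22 hm e f hlt hq2 hi2 hB)
          · exact zeroFF (zeroI12 hm e f hlt hi1 hq2 hq hi2 hB)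
      rw [hone]
      exact ⟨by omega, by rw [Finset.mem_range, hNK]; exact hk, by rw [hone],
        fun h => absurd hFF h⟩

lemma Psi_eq (F : (ℕ → ZMod 2) → ZMod 2) (i : ℕ) : Psi F i = neg1 (F (bitZ i)) := rfl

/-- For any integer `m ≥ 4`, a permutation `π` of `{0,…,m-3}` and
coefficients `e_i, f_i ∈ Z_2`, the truncated pair
`(a,b) = (Ψ_{2^{m-2}-1}(g^0), Ψ_{2^{m-2}-1}(g^1))` of length `N = 2^{m-1}+2`
is a binary Z-complementary pair with ZCZ width `2^{m-2} + 2^{π(m-3)} + 1`. -/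
theorem ebzcp_construction (m : ℕ) (hm : 4 ≤ m) (π : ℕ → ℕ)
    (hπ : Set.BijOn π (Set.Iio (m - 2)) (Set.Iio (m - 2)))
    (e f : ℕ → ZMod 2)
    (N : ℕ) (hN : N = 2 ^ (m - 1) + 2)
    (a b : ℕ → ℤ)
    (ha : a = PsiT (gbf m π e f 0) (2 ^ (m - 2) - 1))
    (hb : b = PsiT (gbf m π e f 1) (2 ^ (m - 2) - 1)) :
    ∀ τ : ℕ, 1 ≤ τ → τ ≤ 2 ^ (m - 2) + 2 ^ (π (m - 3)) →
      rho N a τ + rho N b τ = 0 := by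
  intro τ hτ1 hτ2
  subst hN ha hb
  have hlt : ∀ x, x < m-2 → π x < m-2 := by
    intro x hx
    have := hπ.mapsTo (show x ∈ Set.Iio (m-2) from hx)
    exact this
  have hinj : ∀ x, x < m-2 → ∀ y, y < m-2 → π x = π y → x = y := by
    intro x hx y hy hxy
    exact hπ.injOn (show x ∈ Set.Iio (m-2) from hx) (show y ∈ Set.Iio (m-2) from hy) hxy
  have hsurj : ∀ δ, δ < m-2 → ∃ α, α < m-2 ∧ π α = δ := by
    intro δ hδ
    obtain ⟨α, hα, hαδ⟩ := hπ.surjOn (show δ ∈ Set.Iio (m-2) from hδ)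
    exact ⟨α, hα, hαδ⟩
  unfold rho
  rw [← Finset.sum_add_distrib]
  have heq : ∀ k ∈ Finset.range (2^(m-1) + 2 - τ),
      (PsiT (gbf m π e f 0) (2^(m-2)-1) k * PsiT (gbf m π e f 0) (2^(m-2)-1) (k+τ)
       + PsiT (gbf m π e f 1) (2^(m-2)-1) k * PsiT (gbf m π e f 1) (2^(m-2)-1) (k+τ))
      = FF m π e f τ k := by
    intro k _
    unfold PsiT FF SS
    rw [Psi_eq, Psi_eq, Psi_eq, Psi_eq]
    rw [show 2^(m-2) - 1 + (k + τ) = 2^(m-2) - 1 + k + τ from (add_assoc _ _ _).symm]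
    rw [neg1_mul, neg1_mul]
  rw [Finset.sum_congr rfl heq]
  exact Finset.sum_involution (fun k _ => invol m π τ k)
    (fun k hk => (master hm e f hlt hinj hsurj hτ1 hτ2 hk).1)
    (fun k hk h => (master hm e f hlt hinj hsurj hτ1 hτ2 hk).2.2.2 h)
    (fun k hk => (master hm e f hlt hinj hsurj hτ1 hτ2 hk).2.1)
    (fun k hk => (master hm e f hlt hinj hsurj hτ1 hτ2 hk).2.2.1)
end P9
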